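/- arXiv:2006.14458 — 8 statements merged into one kernel-verified Lean document; each statement's English description precedes it below -/
import Mathlib

section
/- For every integer d ≥ 1 and every sign pattern σ of length d+1, there exists a monic hyperbolic polynomial P of degree d with all coefficients nonzero such that P realizes σ, the moduli of the d roots of P are pairwise distinct, and the moduli of the roots of P are in the canonical order. -/
open Polynomial

/-- A sign pattern of length `d+1`, encoded as a function `ℕ → ℝ`:
its relevant values are at positions `0, …, d` (position `k` carries the sign of the
coefficient of `x^(d-k)`), each equal to `1` or `-1`, and the leading sign is `+1`. -/
def IsSignPattern (d : ℕ) (sp : ℕ → ℝ) : Prop :=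
  sp 0 = 1 ∧ ∀ k ≤ d, sp k = 1 ∨ sp k = -1

/-- `P` is a monic hyperbolic polynomial of degree `d` (it splits into real linear
factors `∏ (X - γ j)`), all of whose coefficients are nonzero, whose roots
`γ 0, …, γ (d-1)` are listed so that their moduli are strictly increasing
(in particular the moduli of the roots are pairwise distinct). -/
def HypOrdered (d : ℕ) (P : Polynomial ℝ) (γ : Fin d → ℝ) : Prop :=
  P = ∏ j : Fin d, (X - C (γ j)) ∧
  (∀ j ≤ d, P.coeff j ≠ 0) ∧
  StrictMono (fun j : Fin d => |γ j|)

/-- The monic degree-`d` polynomial `P` realizes the sign pattern `sp`: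
for `k = 0, …, d` the sign of the coefficient of `x^(d-k)` is `sp k`. -/
def Realizes (d : ℕ) (P : Polynomial ℝ) (sp : ℕ → ℝ) : Prop :=
  ∀ k ≤ d, 0 < sp k * P.coeff (d - k)

/-- The moduli of the roots `γ 0 < … < γ (d-1)` (listed by increasing modulus) of `P`
are in the canonical order: the root of `(i+1)`-th smallest modulus is negative exactly
when `a_(i+1) · a_i > 0`. -/
def CanonicalOrder (d : ℕ) (P : Polynomial ℝ) (γ : Fin d → ℝ) : Prop :=
  ∀ i : Fin d, (γ i < 0 ↔ 0 < P.coeff ((i : ℕ) + 1) * P.coeff (i : ℕ))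

/-- A sign pattern is canonical if every monic hyperbolic polynomial with all
coefficients nonzero and pairwise distinct moduli of roots realizing it has its
moduli of roots in the canonical order. -/
def IsCanonical (d : ℕ) (sp : ℕ → ℝ) : Prop :=
  ∀ (P : Polynomial ℝ) (γ : Fin d → ℝ),
    HypOrdered d P γ → Realizes d P sp → CanonicalOrder d P γ

/-- `sp` is the sign pattern `Σ_{m 0, …, m (s-1)}` of length `d+1`: it consists of
`m 0` signs `+1`, followed by `m 1` signs `-1`, followed by `m 2` signs `+1`, and so on. -/
def IsSigmaOf (d s : ℕ) (m : ℕ → ℕ) (sp : ℕ → ℝ) : Prop :=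
  (∀ i < s, 1 ≤ m i) ∧ (∑ i ∈ Finset.range s, m i = d + 1) ∧
  ∀ i k : ℕ, i < s → (∑ j ∈ Finset.range i, m j) ≤ k →
    k < (∑ j ∈ Finset.range (i + 1), m j) → sp k = (-1) ^ i

lemma pos_iff_of_sign {s x y : ℝ} (h1 : 0 < s * x) (h2 : 0 < s * y) : 0 < x ↔ 0 < y := by
  constructor <;> intro h
  · nlinarith
  · nlinarith

lemma sign_dom {e1 e2 x y T : ℝ} (he1 : e1 = 1 ∨ e1 = -1) (he2 : e2 = 1 ∨ e2 = -1)
    (hA : 0 < e2 * e1 * y) (hT : |x| < T * |y|) : 0 < e1 * (x + e2 * T * y) := by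
  have hx1 := le_abs_self x
  have hx2 := neg_abs_le x
  rcases he1 with rfl | rfl <;> rcases he2 with rfl | rfl
  · have hy : |y| = y := abs_of_pos (by nlinarith)
    rw [hy] at hT; nlinarith
  · have hy : |y| = -y := abs_of_neg (by nlinarith)
    rw [hy] at hT; nlinarith
  · have hy : |y| = -y := abs_of_neg (by nlinarith)
    rw [hy] at hT; nlinarith
  · have hy : |y| = y := abs_of_pos (by nlinarith)
    rw [hy] at hT; nlinarith

lemma aux_realizable : ∀ (d : ℕ) (sp : ℕ → ℝ), IsSignPattern d sp →
    ∃ (P : Polynomial ℝ) (γ : Fin d → ℝ),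
      HypOrdered d P γ ∧ Realizes d P sp ∧ CanonicalOrder d P γ := by
  intro d
  induction d with
  | zero =>
    intro sp hsp
    refine ⟨1, Fin.elim0, ⟨?_, ?_, ?_⟩, ?_, fun i => i.elim0⟩
    · simp
    · intro j hj; interval_cases j; simp
    · intro a; exact a.elim0
    · intro k hk; interval_cases k; simp [hsp.1]
  | succ d ih =>
    intro sp hsp
    obtain ⟨hsp0, hsp1⟩ := hsp
    have hs1 : sp 1 = 1 ∨ sp 1 = -1 := hsp1 1 (by omega)
    have h11 : sp 1 * sp 1 = 1 := by rcases hs1 with h | h <;> rw [h] <;> norm_num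
    have hsp' : IsSignPattern d (fun k => sp 1 * sp (k + 1)) := by
      constructor
      · simpa using h11
      · intro k hk
        rcases hs1 with h | h <;> rcases hsp1 (k + 1) (by omega) with h2 | h2 <;>
          simp [h, h2]
    obtain ⟨P', γ', ⟨hP'eq, hP'ne, hP'mono⟩, hP're, hP'can⟩ := ih _ hsp'
    have hs' : ∀ j ≤ d, 0 < sp 1 * sp (d - j + 1) * P'.coeff j := by
      intro j hj
      have := hP're (d - j) (by omega)
      simpa [Nat.sub_sub_self hj] using this
    have hmonic : P'.Monic := by
      rw [hP'eq]; exact monic_prod_of_monic _ _ fun j _ => monic_X_sub_C _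
    have hdeg : P'.natDegree = d := by
      rw [hP'eq, natDegree_prod_of_monic _ _ fun j _ => monic_X_sub_C _]; simp
    have hcoeffd : P'.coeff d = 1 := by rw [← hdeg]; exact hmonic.coeff_natDegree
    have hcofftop : P'.coeff (d + 1) = 0 := coeff_eq_zero_of_natDegree_lt (by omega)
    have hne : (Finset.range (d + 1)).Nonempty := ⟨0, by simp⟩
    set c := (Finset.range (d + 1)).inf' hne (fun j => |P'.coeff j|) with hcdef
    set Cmax := (Finset.range (d + 1)).sup' hne (fun j => |P'.coeff j|) with hCdef
    have hcpos : 0 < c := by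
      rw [hcdef, Finset.lt_inf'_iff]
      intro b hb
      exact abs_pos.mpr (hP'ne b (Nat.lt_succ_iff.mp (Finset.mem_range.mp hb)))
    have hcb : ∀ j ≤ d, c ≤ |P'.coeff j| := by
      intro j hj
      exact Finset.inf'_le _ (Finset.mem_range.mpr (by omega))
    have hCb : ∀ j ≤ d, |P'.coeff j| ≤ Cmax := by
      intro j hj
      have hm : j ∈ Finset.range (d + 1) := Finset.mem_range.mpr (by omega)
      exact Finset.le_sup' (fun j => |P'.coeff j|) hm
    have hC0 : 0 < Cmax := lt_of_lt_of_le hcpos ((hcb 0 (Nat.zero_le d)).trans (hCb 0 (Nat.zero_le d)))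
    set S := ∑ i : Fin d, |γ' i| with hSdef
    have hS0 : 0 ≤ S := Finset.sum_nonneg fun i _ => abs_nonneg _
    have hCc : 0 ≤ Cmax / c := div_nonneg hC0.le hcpos.le
    set T := 1 + Cmax / c + S with hTdef
    have hTpos : 0 < T := by rw [hTdef]; linarith
    have hTγ : ∀ i : Fin d, |γ' i| < T := by
      intro i
      have h1 : |γ' i| ≤ S := Finset.single_le_sum (f := fun i => |γ' i|)
        (fun j _ => abs_nonneg _) (Finset.mem_univ i)
      rw [hTdef]; linarith
    have hTkey : ∀ j, 1 ≤ j → j ≤ d → |P'.coeff (j - 1)| < T * |P'.coeff j| := by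
      intro j h1 hj
      have ha := hcb j hj
      have hb := hCb (j - 1) (by omega)
      have hc2 : Cmax / c * c = Cmax := div_mul_cancel₀ _ (ne_of_gt hcpos)
      rw [hTdef]
      nlinarith [mul_le_mul_of_nonneg_left ha hCc, mul_nonneg hS0 (abs_nonneg (P'.coeff j)),
        hcpos, abs_nonneg (P'.coeff (j - 1))]
    set P : ℝ[X] := P' * (X - C (-(sp 1) * T)) with hPdef
    set γ : Fin (d + 1) → ℝ := Fin.snoc γ' (-(sp 1) * T) with hγdef
    have hP2 : P = P' * X + C (sp 1 * T) * P' := by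
      rw [hPdef, show (-(sp 1) * T) = -(sp 1 * T) by ring, map_neg]; ring
    have hco : ∀ j : ℕ, P.coeff (j + 1) = P'.coeff j + sp 1 * T * P'.coeff (j + 1) := by
      intro j
      rw [hP2, coeff_add, coeff_mul_X, coeff_C_mul]
    have hco0 : P.coeff 0 = sp 1 * T * P'.coeff 0 := by
      rw [hP2]; simp [mul_coeff_zero]
    have hsgn : ∀ j ≤ d + 1, 0 < sp (d + 1 - j) * P.coeff j := by
      intro j hj
      cases j with
      | zero =>
        rw [hco0]
        have h0 := hs' 0 (Nat.zero_le d)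
        rw [Nat.sub_zero] at h0
        simp only [Nat.sub_zero]
        nlinarith [mul_pos hTpos h0]
      | succ j =>
        rw [hco]
        rcases Nat.lt_or_ge j d with hjd | hjd
        · rw [show d + 1 - (j + 1) = d - j from by omega]
          have hA := hs' (j + 1) (by omega)
          rw [show d - (j + 1) + 1 = d - j from by omega] at hA
          have hT := hTkey (j + 1) (by omega) (by omega)
          simp only [Nat.add_sub_cancel] at hT
          exact sign_dom (hsp1 (d - j) (by omega)) hs1 hA hT
        · have hjd' : j = d := by omega
          rw [hjd', show d + 1 - (d + 1) = 0 from by omega, hsp0, hcoeffd, hcofftop]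
          norm_num
    refine ⟨P, γ, ⟨?_, ?_, ?_⟩, ?_, ?_⟩
    · -- P = ∏ (X - C (γ j))
      rw [Fin.prod_univ_castSucc]
      simp only [hγdef, Fin.snoc_castSucc, Fin.snoc_last]
      rw [← hP'eq, hPdef]
    · -- coefficients nonzero
      intro j hj h0
      have := hsgn j hj
      rw [h0, mul_zero] at this
      exact lt_irrefl 0 this
    · -- strict mono of moduli
      intro a b hab
      have ha : a.val < d := lt_of_lt_of_le hab (Nat.lt_succ_iff.mp b.isLt)
      have hγa : γ a = γ' ⟨a.val, ha⟩ := by rw [hγdef]; simp [Fin.snoc, ha]; rfl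
      by_cases hb : b.val < d
      · have hγb : γ b = γ' ⟨b.val, hb⟩ := by rw [hγdef]; simp [Fin.snoc, hb]; rfl
        simp only [hγa, hγb]
        exact hP'mono (show (⟨a.val, ha⟩ : Fin d) < ⟨b.val, hb⟩ from hab)
      · have hbv : ¬ (b.val < d) := hb
        have hγb : γ b = -(sp 1) * T := by rw [hγdef]; simp [Fin.snoc, hbv]
        simp only [hγa, hγb]
        have habs : |(-(sp 1) * T)| = T := by
          rcases hs1 with h | h <;> rw [h] <;>
            simp [abs_of_pos hTpos, abs_of_nonneg hTpos.le]
        rw [habs]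
        exact hTγ _
    · -- Realizes
      intro k hk
      have := hsgn (d + 1 - k) (by omega)
      rwa [show d + 1 - (d + 1 - k) = k from by omega] at this
    · -- CanonicalOrder
      intro i
      by_cases hi : i.val < d
      · have hγi : γ i = γ' ⟨i.val, hi⟩ := by rw [hγdef]; simp [Fin.snoc, hi]; rfl
        rw [hγi]
        have hcan := hP'can ⟨i.val, hi⟩
        simp only at hcan
        rw [hcan]
        have hA := hs' (i.val + 1) (by omega)
        rw [show d - (i.val + 1) + 1 = d - i.val from by omega] at hA
        have hB := hs' i.val (by omega)
        rw [show d - i.val + 1 = d + 1 - i.val from by omega] at hB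
        have key' : 0 < (sp (d - i.val) * sp (d + 1 - i.val)) *
            (P'.coeff (i.val + 1) * P'.coeff i.val) := by
          have h2 := mul_pos hA hB
          rw [show (sp 1 * sp (d - i.val) * P'.coeff (i.val + 1)) *
              (sp 1 * sp (d + 1 - i.val) * P'.coeff i.val) =
              (sp 1 * sp 1) * ((sp (d - i.val) * sp (d + 1 - i.val)) *
              (P'.coeff (i.val + 1) * P'.coeff i.val)) from by ring, h11, one_mul] at h2
          exact h2
        have hA2 := hsgn (i.val + 1) (by omega)
        rw [show d + 1 - (i.val + 1) = d - i.val from by omega] at hA2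
        have hB2 := hsgn i.val (by omega)
        have key : 0 < (sp (d - i.val) * sp (d + 1 - i.val)) *
            (P.coeff (i.val + 1) * P.coeff i.val) := by
          have h2 := mul_pos hA2 hB2
          rw [show (sp (d - i.val) * P.coeff (i.val + 1)) *
              (sp (d + 1 - i.val) * P.coeff i.val) =
              (sp (d - i.val) * sp (d + 1 - i.val)) *
              (P.coeff (i.val + 1) * P.coeff i.val) from by ring] at h2
          exact h2
        exact pos_iff_of_sign key' key
      · have hieq : (i : ℕ) = d := by omega
        have hγi : γ i = -(sp 1) * T := by rw [hγdef]; simp [Fin.snoc, hi]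
        rw [hγi, hieq]
        have h1 := hsgn (d + 1) le_rfl
        rw [show d + 1 - (d + 1) = 0 from by omega, hsp0, one_mul] at h1
        have h2 := hsgn d (by omega)
        rw [show d + 1 - d = 1 from by omega] at h2
        rcases hs1 with h | h <;> rw [h] <;> rw [h] at h2 <;> constructor <;> intro hh
        · nlinarith
        · nlinarith
        · nlinarith
        · nlinarith

/-- every sign pattern of length `d+1`, `d ≥ 1`, is realizable by a monic
degree-`d` hyperbolic polynomial with nonzero coefficients, pairwise distinct moduli of
roots, and canonical order of the moduli of the roots. -/
theorem every_sign_pattern_realizable_canonically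
    (d : ℕ) (hd : 1 ≤ d) (sp : ℕ → ℝ) (hsp : IsSignPattern d sp) :
    ∃ (P : Polynomial ℝ) (γ : Fin d → ℝ),
      HypOrdered d P γ ∧ Realizes d P sp ∧ CanonicalOrder d P γ :=
  aux_realizable d sp hsp
end

section
/- Every canonical sign pattern is of type 2. Equivalently: if a sign pattern σ = Σ_{m_1,...,m_s} of length d+1 either has two consecutive components m_i > 1, m_{i+1} > 1, or has a component m_i = 2 with 2 ≤ i ≤ s−1, then σ is not canonical, i.e., there exist two monic hyperbolic polynomials of degree d with all coefficients nonzero and pairwise distinct moduli of roots, both realizing σ, whose moduli of roots define two different orders (in particular at least one of them is not the canonical order). -/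
open Polynomial

set_option maxHeartbeats 1000000

open Finset

/-- Shifted coefficient: `shc p i j = p.coeff (j-i)` if `j ≥ i`, else `0`. -/
noncomputable def shc (p : ℝ[X]) (i j : ℕ) : ℝ := if j < i then 0 else p.coeff (j - i)

lemma shc_zero (p : ℝ[X]) (j : ℕ) : shc p 0 j = p.coeff j := by simp [shc]

lemma shc_mul_lin (p : ℝ[X]) (r : ℝ) (i j : ℕ) :
    shc (p * (X - C r)) i j = shc p (i+1) j - r * shc p i j := by
  unfold shc
  rcases lt_trichotomy j i with h | h | h
  · rw [if_pos h, if_pos (by omega), if_pos h]; ring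
  · subst h
    rw [if_neg (by omega), if_pos (by omega)]
    simp [Polynomial.mul_coeff_zero]
    ring
  · rw [if_neg (by omega), if_neg (by omega), if_neg (by omega)]
    have h1 : j - i = (j - i - 1) + 1 := by omega
    have h2 : j - (i+1) = j - i - 1 := by omega
    rw [h1, Polynomial.coeff_mul_X_sub_C, h2]
    ring

/-- sign-dominance: if `|c| = 1`, `0 < c*D` and `|x| < |D|` then `0 < c*(x+D)`. -/
lemma key_dom (c D x : ℝ) (hc : c = 1 ∨ c = -1) (h2 : 0 < c * D) (h3 : |x| < |D|) :
    0 < c * (x + D) := by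
  rcases hc with hc | hc <;> subst hc <;> rw [abs_lt] at h3 <;>
    rcases abs_cases D with ⟨hD, _⟩ | ⟨hD, _⟩ <;> nlinarith

lemma sp_cases_mul {a b : ℝ} (ha : a = 1 ∨ a = -1) (hb : b = 1 ∨ b = -1) :
    a * b = 1 ∨ a * b = -1 := by
  rcases ha with h | h <;> rcases hb with h' | h' <;> simp [h, h']

lemma sp_sq {a : ℝ} (ha : a = 1 ∨ a = -1) : a * a = 1 := by
  rcases ha with h | h <;> simp [h]

lemma coeff_ne_of_signpos {c x : ℝ} (h : 0 < c * x) : x ≠ 0 := by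
  intro h0; rw [h0, mul_zero] at h; exact lt_irrefl 0 h

lemma step_single (d k : ℕ) (sp : ℕ → ℝ)
    (hsp : ∀ x ≤ d, sp x = 1 ∨ sp x = -1)
    (hkd : k + 1 ≤ d)
    (P : ℝ[X]) (N : ℝ)
    (hdeg : P.natDegree = k) (hmonic : P.Monic)
    (hN : 0 ≤ N)
    (hsign : ∀ j ≤ k, 0 < sp (d - j) * sp (d - k) * P.coeff j) :
    ∃ r : ℝ, N < |r| ∧
      ∀ j ≤ k + 1, 0 < sp (d - j) * sp (d - (k+1)) * (P * (X - C r)).coeff j := by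
  set R : ℝ := 1 + N + ∑ j ∈ range (k+1), |shc P 1 j| / |P.coeff j| with hR
  have hsum : (0:ℝ) ≤ ∑ j ∈ range (k+1), |shc P 1 j| / |P.coeff j| :=
    Finset.sum_nonneg (fun j _ => div_nonneg (abs_nonneg _) (abs_nonneg _))
  have hRpos : 0 < R := by rw [hR]; linarith
  have hRN : N < R := by rw [hR]; linarith
  set s : ℝ := sp (d - (k+1)) * sp (d - k) with hs
  have hs1 : s = 1 ∨ s = -1 :=
    sp_cases_mul (hsp _ (by omega)) (hsp _ (by omega))
  have hsabs : |s| = 1 := by rcases hs1 with h | h <;> simp [h]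
  refine ⟨-(s * R), ?_, ?_⟩
  · rw [abs_neg, abs_mul, hsabs, one_mul, abs_of_pos hRpos]; exact hRN
  intro j hj
  have hcoeff : (P * (X - C (-(s * R)))).coeff j
      = shc P 1 j - (-(s * R)) * P.coeff j := by
    rw [← shc_zero (P * (X - C (-(s * R)))) j, shc_mul_lin, shc_zero]
  rw [hcoeff]
  rcases Nat.lt_or_ge j (k+1) with hjk | hjk
  · -- j ≤ k
    have hjk' : j ≤ k := by omega
    have hsign' := hsign j hjk'
    have hPj : P.coeff j ≠ 0 := coeff_ne_of_signpos hsign'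
    have habsPj : 0 < |P.coeff j| := abs_pos.mpr hPj
    have hterm : |shc P 1 j| / |P.coeff j| ≤ ∑ j ∈ range (k+1), |shc P 1 j| / |P.coeff j| :=
      Finset.single_le_sum (f := fun i => |shc P 1 i| / |P.coeff i|)
        (fun i _ => div_nonneg (abs_nonneg _) (abs_nonneg _)) (Finset.mem_range.mpr hjk)
    have hterm2 : |shc P 1 j| / |P.coeff j| < R := by rw [hR]; linarith
    have hxD : |shc P 1 j| < R * |P.coeff j| := by
      rw [div_lt_iff₀ habsPj] at hterm2; linarith [hterm2]
    have hc1 : sp (d - j) * sp (d - (k+1)) = 1 ∨ sp (d - j) * sp (d - (k+1)) = -1 :=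
      sp_cases_mul (hsp _ (by omega)) (hsp _ (by omega))
    have hsq1 : sp (d - (k+1)) * sp (d - (k+1)) = 1 := sp_sq (hsp _ (by omega))
    have hcd : 0 < (sp (d - j) * sp (d - (k+1))) * (s * R * P.coeff j) := by
      have heq : (sp (d - j) * sp (d - (k+1))) * (s * R * P.coeff j)
          = (sp (d - (k+1)) * sp (d - (k+1))) * ((sp (d - j) * sp (d - k) * P.coeff j) * R) := by
        rw [hs]; ring
      rw [heq, hsq1, one_mul]
      exact mul_pos hsign' hRpos
    have habsD : |s * R * P.coeff j| = R * |P.coeff j| := by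
      rw [abs_mul, abs_mul, hsabs, one_mul, abs_of_pos hRpos]
    have := key_dom (sp (d - j) * sp (d - (k+1))) (s * R * P.coeff j) (shc P 1 j)
      hc1 hcd (by rw [habsD]; exact hxD)
    have heq2 : (sp (d - j) * sp (d - (k+1))) * (shc P 1 j + s * R * P.coeff j)
        = sp (d - j) * sp (d - (k+1)) * (shc P 1 j - -(s * R) * P.coeff j) := by ring
    linarith [heq2 ▸ this]
  · -- j = k+1
    have hj1 : j = k + 1 := by omega
    subst hj1
    have h0 : P.coeff (k+1) = 0 := coeff_eq_zero_of_natDegree_lt (by omega)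
    have h1 : shc P 1 (k+1) = P.coeff k := by simp [shc]
    have h2 : P.coeff k = 1 := by
      have := hmonic.coeff_natDegree; rwa [hdeg] at this
    rw [h0, h1, h2]
    have hsq1 : sp (d - (k+1)) * sp (d - (k+1)) = 1 := sp_sq (hsp _ (by omega))
    have : d - (k+1) = d - (k+1) := rfl
    nlinarith [hsq1]

lemma step_triple (d k : ℕ) (sp : ℕ → ℝ)
    (hsp : ∀ x ≤ d, sp x = 1 ∨ sp x = -1)
    (hkd : k + 3 ≤ d)
    (u v w : ℝ)
    (hu : 0 < |u|)
    (H1 : (u + v + w) * (sp (d - (k+2)) * sp (d - (k+3))) < 0)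
    (H2 : 0 < (u*v + u*w + v*w) * (sp (d - (k+1)) * sp (d - (k+3))))
    (H3 : (u*v*w) * (sp (d - k) * sp (d - (k+3))) < 0)
    (P : ℝ[X]) (N : ℝ)
    (hdeg : P.natDegree = k) (hmonic : P.Monic) (hN : 0 ≤ N)
    (hsign : ∀ j ≤ k, 0 < sp (d - j) * sp (d - k) * P.coeff j) :
    ∃ T : ℝ, 0 < T ∧ N < T * |u| ∧
      ∀ j ≤ k + 3, 0 < sp (d - j) * sp (d - (k+3)) *
        (P * ((X - C (u*T)) * ((X - C (v*T)) * (X - C (w*T))))).coeff j := by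
  have he1 : (u + v + w) ≠ 0 := by
    intro h; rw [h, zero_mul] at H1; exact lt_irrefl 0 H1
  have he2 : (u*v + u*w + v*w) ≠ 0 := by
    intro h; rw [h, zero_mul] at H2; exact lt_irrefl 0 H2
  have he3 : (u*v*w) ≠ 0 := by
    intro h; rw [h, zero_mul] at H3; exact lt_irrefl 0 H3
  have ha1 : 0 < |u + v + w| := abs_pos.mpr he1
  have ha2 : 0 < |u*v + u*w + v*w| := abs_pos.mpr he2
  have ha3 : 0 < |u*v*w| := abs_pos.mpr he3
  -- the big sum
  obtain ⟨S, hS⟩ : ∃ S : ℝ, S = ∑ j ∈ range (k+1),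
      (|shc P 3 j| + |u+v+w| * |shc P 2 j| + |u*v+u*w+v*w| * |shc P 1 j|)
        / (|u*v*w| * |P.coeff j|) := ⟨_, rfl⟩
  have hSnn : (0:ℝ) ≤ S := hS ▸ Finset.sum_nonneg (fun j _ => div_nonneg
    (by positivity) (by positivity))
  obtain ⟨T, hT⟩ : ∃ T : ℝ, T = 1 + N / |u| + S
      + (|shc P 3 (k+1)| + |u+v+w| * |shc P 2 (k+1)|) / |u*v+u*w+v*w|
      + |shc P 3 (k+2)| / |u+v+w| := ⟨_, rfl⟩
  have hq1 : (0:ℝ) ≤ N / |u| := div_nonneg hN (abs_nonneg _)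
  have hq2 : (0:ℝ) ≤ (|shc P 3 (k+1)| + |u+v+w| * |shc P 2 (k+1)|) / |u*v+u*w+v*w| :=
    div_nonneg (by positivity) (abs_nonneg _)
  have hq3 : (0:ℝ) ≤ |shc P 3 (k+2)| / |u+v+w| := div_nonneg (abs_nonneg _) (abs_nonneg _)
  have hT1 : 1 ≤ T := by rw [hT]; rw [hS] at *; linarith
  have hTpos : 0 < T := by linarith
  have hNT : N < T * |u| := by
    have : N / |u| < T := by rw [hT]; rw [hS] at *; linarith
    calc N = N / |u| * |u| := by field_simp
    _ < T * |u| := by exact mul_lt_mul_of_pos_right this hu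
  refine ⟨T, hTpos, hNT, ?_⟩
  have hQcoeff : ∀ j, (P * ((X - C (u*T)) * ((X - C (v*T)) * (X - C (w*T))))).coeff j
      = shc P 3 j - (u+v+w)*T * shc P 2 j + (u*v+u*w+v*w)*T^2 * shc P 1 j
        - (u*v*w)*T^3 * P.coeff j := by
    intro j
    have hassoc : P * ((X - C (u*T)) * ((X - C (v*T)) * (X - C (w*T))))
        = ((P * (X - C (u*T))) * (X - C (v*T))) * (X - C (w*T)) := by ring
    rw [hassoc, ← shc_zero]
    simp only [shc_mul_lin]
    rw [shc_zero]
    ring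
  have hcoeffk : P.coeff k = 1 := by
    have := hmonic.coeff_natDegree; rwa [hdeg] at this
  have hcoeff_hi : ∀ j, k < j → P.coeff j = 0 := fun j hj =>
    coeff_eq_zero_of_natDegree_lt (by omega)
  intro j hj
  rw [hQcoeff j]
  rcases Nat.lt_or_ge j (k+1) with hjk | hjk
  · -- j ≤ k : dominant term -e3 T³ aⱼ
    have hjk' : j ≤ k := by omega
    have hsign' := hsign j hjk'
    have hPj : P.coeff j ≠ 0 := coeff_ne_of_signpos hsign'
    have habsPj : 0 < |P.coeff j| := abs_pos.mpr hPj
    have hterm : (|shc P 3 j| + |u+v+w| * |shc P 2 j| + |u*v+u*w+v*w| * |shc P 1 j|)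
        / (|u*v*w| * |P.coeff j|) < T := by
      have h1 : (|shc P 3 j| + |u+v+w| * |shc P 2 j| + |u*v+u*w+v*w| * |shc P 1 j|)
          / (|u*v*w| * |P.coeff j|) ≤ S := hS ▸
        Finset.single_le_sum (f := fun i =>
          (|shc P 3 i| + |u+v+w| * |shc P 2 i| + |u*v+u*w+v*w| * |shc P 1 i|)
            / (|u*v*w| * |P.coeff i|))
          (fun i _ => div_nonneg (by positivity) (by positivity)) (Finset.mem_range.mpr hjk)
      rw [hT]; rw [hS] at *; linarith
    have hnum : |shc P 3 j| + |u+v+w| * |shc P 2 j| + |u*v+u*w+v*w| * |shc P 1 j|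
        < T * (|u*v*w| * |P.coeff j|) := by
      rw [div_lt_iff₀ (by positivity)] at hterm; linarith
    -- abs bound on x
    have hx : |shc P 3 j - (u+v+w)*T * shc P 2 j + (u*v+u*w+v*w)*T^2 * shc P 1 j|
        ≤ |shc P 3 j| + |u+v+w| * T * |shc P 2 j| + |u*v+u*w+v*w| * T^2 * |shc P 1 j| := by
      have t1 := abs_add_le (shc P 3 j - (u+v+w)*T * shc P 2 j) ((u*v+u*w+v*w)*T^2 * shc P 1 j)
      have t2 := abs_sub (shc P 3 j) ((u+v+w)*T * shc P 2 j)
      have t3 : |(u+v+w)*T * shc P 2 j| = |u+v+w| * T * |shc P 2 j| := by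
        rw [abs_mul, abs_mul, abs_of_pos hTpos]
      have t4 : |(u*v+u*w+v*w)*T^2 * shc P 1 j| = |u*v+u*w+v*w| * T^2 * |shc P 1 j| := by
        rw [abs_mul, abs_mul, abs_of_pos (by positivity : (0:ℝ) < T^2)]
      calc |shc P 3 j - (u+v+w)*T * shc P 2 j + (u*v+u*w+v*w)*T^2 * shc P 1 j|
          ≤ |shc P 3 j - (u+v+w)*T * shc P 2 j| + |(u*v+u*w+v*w)*T^2 * shc P 1 j| := t1
        _ ≤ |shc P 3 j| + |(u+v+w)*T * shc P 2 j| + |(u*v+u*w+v*w)*T^2 * shc P 1 j| := by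
            linarith [t2]
        _ = |shc P 3 j| + |u+v+w| * T * |shc P 2 j| + |u*v+u*w+v*w| * T^2 * |shc P 1 j| := by
            rw [t3, t4]
    have hxD : |shc P 3 j - (u+v+w)*T * shc P 2 j + (u*v+u*w+v*w)*T^2 * shc P 1 j|
        < |-(u*v*w*T^3 * P.coeff j)| := by
      have hD : |-(u*v*w*T^3 * P.coeff j)| = |u*v*w| * T^3 * |P.coeff j| := by
        rw [abs_neg, abs_mul, abs_mul, abs_of_pos (by positivity : (0:ℝ) < T^3)]
      rw [hD]
      have hb1 : |shc P 3 j| ≤ T^2 * |shc P 3 j| := by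
        have h9 : (0:ℝ) ≤ (T^2 - 1) * |shc P 3 j| :=
          mul_nonneg (by nlinarith) (abs_nonneg _)
        linarith
      have hb2 : |u+v+w| * T * |shc P 2 j| ≤ T^2 * (|u+v+w| * |shc P 2 j|) := by
        have h9 : (0:ℝ) ≤ (T^2 - T) * (|u+v+w| * |shc P 2 j|) :=
          mul_nonneg (by nlinarith) (by positivity)
        linarith [show |u+v+w| * T * |shc P 2 j| = T * (|u+v+w| * |shc P 2 j|) from by ring]
      have hb3 : |u*v+u*w+v*w| * T^2 * |shc P 1 j| = T^2 * (|u*v+u*w+v*w| * |shc P 1 j|) := by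
        ring
      have hmul : T^2 * (|shc P 3 j| + |u+v+w| * |shc P 2 j| + |u*v+u*w+v*w| * |shc P 1 j|)
          < T^2 * (T * (|u*v*w| * |P.coeff j|)) :=
        mul_lt_mul_of_pos_left hnum (by positivity)
      have hdist : T^2 * (|shc P 3 j| + |u+v+w| * |shc P 2 j| + |u*v+u*w+v*w| * |shc P 1 j|)
          = T^2 * |shc P 3 j| + T^2 * (|u+v+w| * |shc P 2 j|)
            + T^2 * (|u*v+u*w+v*w| * |shc P 1 j|) := by ring
      have hring : T^2 * (T * (|u*v*w| * |P.coeff j|)) = |u*v*w| * T^3 * |P.coeff j| := by ring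
      linarith [hx]
    have hc1 : sp (d-j) * sp (d-(k+3)) = 1 ∨ sp (d-j) * sp (d-(k+3)) = -1 :=
      sp_cases_mul (hsp _ (by omega)) (hsp _ (by omega))
    have hsqk : sp (d-k) * sp (d-k) = 1 := sp_sq (hsp _ (by omega))
    have hB : 0 < -((u*v*w) * (sp (d-k) * sp (d-(k+3)))) := by linarith
    have hcd : 0 < (sp (d-j) * sp (d-(k+3))) * (-(u*v*w*T^3 * P.coeff j)) := by
      have heq : (sp (d-j) * sp (d-(k+3))) * (-(u*v*w*T^3 * P.coeff j)) * (sp (d-k) * sp (d-k))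
          = (sp (d-j) * sp (d-k) * P.coeff j)
            * (-((u*v*w) * (sp (d-k) * sp (d-(k+3))))) * T^3 := by ring
      rw [hsqk, mul_one] at heq
      rw [heq]
      exact mul_pos (mul_pos hsign' hB) (by positivity)
    have := key_dom (sp (d-j) * sp (d-(k+3))) (-(u*v*w*T^3 * P.coeff j))
      (shc P 3 j - (u+v+w)*T * shc P 2 j + (u*v+u*w+v*w)*T^2 * shc P 1 j) hc1 hcd hxD
    have heq2 : (sp (d-j) * sp (d-(k+3)))
        * ((shc P 3 j - (u+v+w)*T * shc P 2 j + (u*v+u*w+v*w)*T^2 * shc P 1 j)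
           + -(u*v*w*T^3 * P.coeff j))
        = sp (d-j) * sp (d-(k+3)) * (shc P 3 j - (u+v+w)*T * shc P 2 j
            + (u*v+u*w+v*w)*T^2 * shc P 1 j - u*v*w*T^3 * P.coeff j) := by ring
    linarith [heq2 ▸ this]
  · rcases Nat.lt_or_ge j (k+2) with hjk2 | hjk2
    · -- j = k+1 : dominant term e2 T²
      have hj1 : j = k + 1 := by omega
      subst hj1
      have hsh1 : shc P 1 (k+1) = P.coeff k := by simp [shc]
      have hc0 : P.coeff (k+1) = 0 := hcoeff_hi _ (by omega)
      rw [hsh1, hcoeffk, hc0]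
      have hterm : (|shc P 3 (k+1)| + |u+v+w| * |shc P 2 (k+1)|) / |u*v+u*w+v*w| < T := by
        rw [hT]; rw [hS] at *; linarith
      have hnum : |shc P 3 (k+1)| + |u+v+w| * |shc P 2 (k+1)| < T * |u*v+u*w+v*w| := by
        rw [div_lt_iff₀ ha2] at hterm; linarith
      have hc1 : sp (d-(k+1)) * sp (d-(k+3)) = 1 ∨ sp (d-(k+1)) * sp (d-(k+3)) = -1 :=
        sp_cases_mul (hsp _ (by omega)) (hsp _ (by omega))
      have hcd : 0 < (sp (d-(k+1)) * sp (d-(k+3))) * ((u*v+u*w+v*w)*T^2 * 1) := by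
        have heq : (sp (d-(k+1)) * sp (d-(k+3))) * ((u*v+u*w+v*w)*T^2 * 1)
            = ((u*v + u*w + v*w) * (sp (d - (k+1)) * sp (d - (k+3)))) * T^2 := by ring
        rw [heq]; exact mul_pos H2 (by positivity)
      have hxD : |shc P 3 (k+1) - (u+v+w)*T * shc P 2 (k+1)| < |(u*v+u*w+v*w)*T^2 * 1| := by
        have hD : |(u*v+u*w+v*w)*T^2 * 1| = |u*v+u*w+v*w| * T^2 := by
          rw [mul_one, abs_mul, abs_of_pos (by positivity : (0:ℝ) < T^2)]
        rw [hD]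
        have t2 := abs_sub (shc P 3 (k+1)) ((u+v+w)*T * shc P 2 (k+1))
        have t3 : |(u+v+w)*T * shc P 2 (k+1)| = |u+v+w| * T * |shc P 2 (k+1)| := by
          rw [abs_mul, abs_mul, abs_of_pos hTpos]
        nlinarith [abs_nonneg (shc P 3 (k+1)), abs_nonneg (shc P 2 (k+1)), ha1.le]
      have := key_dom (sp (d-(k+1)) * sp (d-(k+3))) ((u*v+u*w+v*w)*T^2 * 1)
        (shc P 3 (k+1) - (u+v+w)*T * shc P 2 (k+1)) hc1 hcd hxD
      have heq2 : (sp (d-(k+1)) * sp (d-(k+3)))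
          * ((shc P 3 (k+1) - (u+v+w)*T * shc P 2 (k+1)) + (u*v+u*w+v*w)*T^2 * 1)
          = sp (d-(k+1)) * sp (d-(k+3)) * (shc P 3 (k+1) - (u+v+w)*T * shc P 2 (k+1)
              + (u*v+u*w+v*w)*T^2 * 1 - u*v*w*T^3 * 0) := by ring
      linarith [heq2 ▸ this]
    · rcases Nat.lt_or_ge j (k+3) with hjk3 | hjk3
      · -- j = k+2 : dominant term -e1 T
        have hj2 : j = k + 2 := by omega
        subst hj2
        have hsh2 : shc P 2 (k+2) = P.coeff k := by simp [shc]
        have hsh1 : shc P 1 (k+2) = P.coeff (k+1) := by simp [shc]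
        have hc0 : P.coeff (k+1) = 0 := hcoeff_hi _ (by omega)
        have hc0' : P.coeff (k+2) = 0 := hcoeff_hi _ (by omega)
        rw [hsh2, hsh1, hcoeffk, hc0, hc0']
        have hterm : |shc P 3 (k+2)| / |u+v+w| < T := by rw [hT]; rw [hS] at *; linarith
        have hnum : |shc P 3 (k+2)| < T * |u+v+w| := by
          rw [div_lt_iff₀ ha1] at hterm; linarith
        have hc1 : sp (d-(k+2)) * sp (d-(k+3)) = 1 ∨ sp (d-(k+2)) * sp (d-(k+3)) = -1 :=
          sp_cases_mul (hsp _ (by omega)) (hsp _ (by omega))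
        have hcd : 0 < (sp (d-(k+2)) * sp (d-(k+3))) * (-((u+v+w)*T * 1)) := by
          have heq : (sp (d-(k+2)) * sp (d-(k+3))) * (-((u+v+w)*T * 1))
              = (-((u + v + w) * (sp (d - (k+2)) * sp (d - (k+3))))) * T := by ring
          rw [heq]; exact mul_pos (by linarith) hTpos
        have hxD : |shc P 3 (k+2)| < |-((u+v+w)*T * 1)| := by
          have hD : |-((u+v+w)*T * 1)| = |u+v+w| * T := by
            rw [mul_one, abs_neg, abs_mul, abs_of_pos hTpos]
          rw [hD]; linarith
        have := key_dom (sp (d-(k+2)) * sp (d-(k+3))) (-((u+v+w)*T * 1))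
          (shc P 3 (k+2)) hc1 hcd hxD
        have heq2 : (sp (d-(k+2)) * sp (d-(k+3))) * (shc P 3 (k+2) + -((u+v+w)*T * 1))
            = sp (d-(k+2)) * sp (d-(k+3)) * (shc P 3 (k+2) - (u+v+w)*T * 1
                + (u*v+u*w+v*w)*T^2 * 0 - u*v*w*T^3 * 0) := by ring
        linarith [heq2 ▸ this]
      · -- j = k+3 : leading coefficient 1
        have hj3 : j = k + 3 := by omega
        subst hj3
        have hsh3 : shc P 3 (k+3) = P.coeff k := by simp [shc]
        have hsh2 : shc P 2 (k+3) = P.coeff (k+1) := by simp [shc]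
        have hsh1 : shc P 1 (k+3) = P.coeff (k+2) := by simp [shc]
        have hc0 : P.coeff (k+1) = 0 := hcoeff_hi _ (by omega)
        have hc0' : P.coeff (k+2) = 0 := hcoeff_hi _ (by omega)
        have hc0'' : P.coeff (k+3) = 0 := hcoeff_hi _ (by omega)
        rw [hsh3, hsh2, hsh1, hcoeffk, hc0, hc0', hc0'']
        have hsq3 : sp (d-(k+3)) * sp (d-(k+3)) = 1 := sp_sq (hsp _ (by omega))
        nlinarith [hsq3]

lemma prodP_monic (γ : ℕ → ℝ) (k : ℕ) : (∏ j ∈ range k, (X - C (γ j))).Monic :=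
  monic_prod_of_monic _ _ (fun j _ => monic_X_sub_C _)

lemma prodP_deg (γ : ℕ → ℝ) (k : ℕ) : (∏ j ∈ range k, (X - C (γ j))).natDegree = k := by
  rw [natDegree_prod_of_monic _ _ (fun j _ => monic_X_sub_C _)]
  simp [natDegree_X_sub_C]

/-- The recursion invariant. -/
def Aux (d k0 : ℕ) (sp : ℕ → ℝ) (v : ℝ) (k : ℕ) : Prop :=
  ∃ (γ : ℕ → ℝ) (P : ℝ[X]) (N : ℝ),
    P = ∏ j ∈ Finset.range k, (X - C (γ j)) ∧
    (∀ i j, i < j → j < k → |γ i| < |γ j|) ∧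
    (∀ i < k, γ i ≠ 0) ∧
    0 ≤ N ∧ (∀ i < k, |γ i| ≤ N) ∧
    (∀ j ≤ k, 0 < sp (d - j) * sp (d - k) * P.coeff j) ∧
    (d - k0 + 1 ≤ k → (γ (d - k0 - 1) < 0 ↔ v < 0))

lemma aux_step (d k0 : ℕ) (sp : ℕ → ℝ) (v : ℝ)
    (hsp : ∀ x ≤ d, sp x = 1 ∨ sp x = -1)
    (k : ℕ) (hkd : k + 1 ≤ d)
    (hside : k + 1 ≤ d - k0 - 2 ∨ d - k0 + 1 ≤ k)
    (h : Aux d k0 sp v k) : Aux d k0 sp v (k + 1) := by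
  obtain ⟨γ, P, N, hP, hmono, hnz, hN0, hγN, hsign, hmid⟩ := h
  have hmonic : P.Monic := hP ▸ prodP_monic γ k
  have hdeg : P.natDegree = k := hP ▸ prodP_deg γ k
  obtain ⟨r, hrN, hsign'⟩ := step_single d k sp hsp hkd P N hdeg hmonic hN0 hsign
  have hrpos : 0 < |r| := lt_of_le_of_lt hN0 hrN
  set γ' : ℕ → ℝ := fun i => if i = k then r else γ i with hγ'
  have hγk : γ' k = r := by simp [hγ']
  have hγlow : ∀ i, i < k → γ' i = γ i := fun i hi => by
    simp only [hγ']; rw [if_neg (by omega)]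
  refine ⟨γ', P * (X - C r), |r|, ?_, ?_, ?_, abs_nonneg r, ?_, ?_, ?_⟩
  · rw [Finset.prod_range_succ, hγk]
    congr 1
    rw [hP]
    exact Finset.prod_congr rfl (fun i hi => by
      rw [hγlow i (Finset.mem_range.mp hi)])
  · intro i j hij hjk
    rcases Nat.lt_or_ge j k with hj | hj
    · rw [hγlow i (by omega), hγlow j hj]; exact hmono i j hij hj
    · have hj' : j = k := by omega
      subst hj'
      rw [hγlow i (by omega), hγk]
      exact lt_of_le_of_lt (hγN i (by omega)) hrN
  · intro i hi
    rcases Nat.lt_or_ge i k with h' | h'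
    · rw [hγlow i h']; exact hnz i h'
    · have : i = k := by omega
      subst this; rw [hγk]; exact abs_pos.mp hrpos
  · intro i hi
    rcases Nat.lt_or_ge i k with h' | h'
    · rw [hγlow i h']; exact le_trans (hγN i h') hrN.le
    · have : i = k := by omega
      subst this; rw [hγk]
  · exact hsign'
  · intro hk
    rcases hside with hs | hs
    · omega
    · rw [hγlow _ (by omega)]
      exact hmid (by omega)

lemma aux_triple (d k0 : ℕ) (sp : ℕ → ℝ) (u v w : ℝ)
    (hsp : ∀ x ≤ d, sp x = 1 ∨ sp x = -1)
    (hk0 : 1 ≤ k0) (hk0d : k0 + 2 ≤ d)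
    (hu : 0 < |u|) (huv : |u| < |v|) (hvw : |v| < |w|)
    (HA : (u + v + w) * (sp k0 * sp (k0 - 1)) < 0)
    (HB : 0 < (u*v + u*w + v*w) * (sp (k0 + 1) * sp (k0 - 1)))
    (HC : (u*v*w) * (sp (k0 + 2) * sp (k0 - 1)) < 0)
    (h : Aux d k0 sp v (d - k0 - 2)) : Aux d k0 sp v (d - k0 + 1) := by
  obtain ⟨γ, P, N, hP, hmono, hnz, hN0, hγN, hsign, hmid⟩ := h
  set k := d - k0 - 2 with hk
  have hmonic : P.Monic := hP ▸ prodP_monic γ k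
  have hdeg : P.natDegree = k := hP ▸ prodP_deg γ k
  have hkd : k + 3 ≤ d := by omega
  have e2 : d - (k+2) = k0 := by omega
  have e3 : d - (k+3) = k0 - 1 := by omega
  have e1 : d - (k+1) = k0 + 1 := by omega
  have e0 : d - k = k0 + 2 := by omega
  obtain ⟨T, hT, hNT, hsign'⟩ := step_triple d k sp hsp hkd u v w hu
    (by rw [e2, e3]; exact HA) (by rw [e1, e3]; exact HB) (by rw [e0, e3]; exact HC)
    P N hdeg hmonic hN0 (by rw [e0]; intro j hj; rw [← e0]; exact hsign j hj)
  have hk3 : d - k0 + 1 = k + 3 := by omega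
  rw [hk3]
  have habsu : |u * T| = |u| * T := by rw [abs_mul, abs_of_pos hT]
  have habsv : |v * T| = |v| * T := by rw [abs_mul, abs_of_pos hT]
  have habsw : |w * T| = |w| * T := by rw [abs_mul, abs_of_pos hT]
  set γ' : ℕ → ℝ := fun i =>
    if i = k then u * T else if i = k + 1 then v * T else if i = k + 2 then w * T else γ i
    with hγ'
  have hγk : γ' k = u * T := by simp [hγ']
  have hγk1 : γ' (k+1) = v * T := by simp [hγ']
  have hγk2 : γ' (k+2) = w * T := by simp [hγ']
  have hγlow : ∀ i, i < k → γ' i = γ i := fun i hi => by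
    simp only [hγ']; rw [if_neg (by omega), if_neg (by omega), if_neg (by omega)]
  refine ⟨γ', P * ((X - C (u*T)) * ((X - C (v*T)) * (X - C (w*T)))), |w| * T,
    ?_, ?_, ?_, by positivity, ?_, ?_, ?_⟩
  · rw [Finset.prod_range_succ, Finset.prod_range_succ, Finset.prod_range_succ,
      hγk, hγk1, hγk2]
    have : ∏ j ∈ range k, (X - C (γ' j)) = ∏ j ∈ range k, (X - C (γ j)) :=
      Finset.prod_congr rfl (fun i hi => by rw [hγlow i (Finset.mem_range.mp hi)])
    rw [this, ← hP]; ring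
  · intro i j hij hjk
    have key : ∀ i, i < k + 3 → |γ' i| ≤ |w| * T ∧ (i < k → |γ' i| < T * |u|)
        ∧ (i = k → |γ' i| = |u| * T) ∧ (i = k+1 → |γ' i| = |v| * T)
        ∧ (i = k+2 → |γ' i| = |w| * T) := by
      intro i hi
      rcases Nat.lt_or_ge i k with h' | h'
      · rw [hγlow i h']
        have h1 : |γ i| ≤ N := hγN i h'
        have h2 : |γ i| < T * |u| := lt_of_le_of_lt h1 hNT
        refine ⟨?_, fun _ => h2, by omega, by omega, by omega⟩
        nlinarith [abs_nonneg (γ i), hu, huv, hvw, hT]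
      · rcases Nat.lt_or_ge i (k+1) with h'' | h''
        · have : i = k := by omega
          subst this
          rw [hγk, habsu]
          exact ⟨by nlinarith, by omega, fun _ => rfl, by omega, by omega⟩
        · rcases Nat.lt_or_ge i (k+2) with h3 | h3
          · have : i = k + 1 := by omega
            subst this
            rw [hγk1, habsv]
            exact ⟨by nlinarith, by omega, by omega, fun _ => rfl, by omega⟩
          · have : i = k + 2 := by omega
            subst this
            rw [hγk2, habsw]
            exact ⟨le_refl _, by omega, by omega, by omega, fun _ => rfl⟩
    obtain ⟨_, hi1, hi2, hi3, hi4⟩ := key i (by omega)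
    obtain ⟨_, hj1, hj2, hj3, hj4⟩ := key j hjk
    rcases Nat.lt_or_ge j k with hjc | hjc
    · rw [hγlow i (by omega), hγlow j hjc]; exact hmono i j hij hjc
    · rcases Nat.lt_or_ge j (k+1) with hj' | hj'
      · have hjeq : j = k := by omega
        rw [hj2 hjeq]
        have := hi1 (by omega)
        calc |γ' i| < T * |u| := this
        _ = |u| * T := by ring
      · rcases Nat.lt_or_ge j (k+2) with hj'' | hj''
        · have hjeq : j = k + 1 := by omega
          rw [hj3 hjeq]
          rcases Nat.lt_or_ge i k with hic | hic
          · have := hi1 hic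
            have h9 : T * |u| ≤ |v| * T := by nlinarith
            linarith
          · have hieq : i = k := by omega
            rw [hi2 hieq]
            nlinarith
        · have hjeq : j = k + 2 := by omega
          rw [hj4 hjeq]
          rcases Nat.lt_or_ge i k with hic | hic
          · have := hi1 hic
            have h9 : T * |u| ≤ |w| * T := by nlinarith
            linarith
          · rcases Nat.lt_or_ge i (k+1) with hic' | hic'
            · have hieq : i = k := by omega
              rw [hi2 hieq]; nlinarith
            · have hieq : i = k + 1 := by omega
              rw [hi3 hieq]; nlinarith
  · intro i hi
    rcases Nat.lt_or_ge i k with h' | h'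
    · rw [hγlow i h']; exact hnz i h'
    · have hune : u ≠ 0 := abs_pos.mp hu
      have hvne : v ≠ 0 := abs_pos.mp (lt_trans hu huv)
      have hwne : w ≠ 0 := abs_pos.mp (lt_trans (lt_trans hu huv) hvw)
      rcases Nat.lt_or_ge i (k+1) with h'' | h''
      · have : i = k := by omega
        subst this; rw [hγk]; exact mul_ne_zero hune (ne_of_gt hT)
      · rcases Nat.lt_or_ge i (k+2) with h3 | h3
        · have : i = k + 1 := by omega
          subst this; rw [hγk1]; exact mul_ne_zero hvne (ne_of_gt hT)
        · have : i = k + 2 := by omega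
          subst this; rw [hγk2]; exact mul_ne_zero hwne (ne_of_gt hT)
  · intro i hi
    rcases Nat.lt_or_ge i k with h' | h'
    · rw [hγlow i h']
      have h1 : |γ i| ≤ N := hγN i h'
      nlinarith [abs_nonneg (γ i), hu, huv, hvw, hT]
    · rcases Nat.lt_or_ge i (k+1) with h'' | h''
      · have : i = k := by omega
        subst this; rw [hγk, habsu]; nlinarith
      · rcases Nat.lt_or_ge i (k+2) with h3 | h3
        · have : i = k + 1 := by omega
          subst this; rw [hγk1, habsv]; nlinarith
        · have : i = k + 2 := by omega
          subst this; rw [hγk2, habsw]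
  · exact hsign'
  · intro _
    have : d - k0 - 1 = k + 1 := by omega
    rw [this, hγk1]
    constructor
    · intro h9; nlinarith
    · intro h9; nlinarith

lemma main_construct (d k0 : ℕ) (sp : ℕ → ℝ) (u v w : ℝ)
    (hsp : ∀ x ≤ d, sp x = 1 ∨ sp x = -1) (hsp0 : sp 0 = 1)
    (hk0 : 1 ≤ k0) (hk0d : k0 + 2 ≤ d)
    (hu : 0 < |u|) (huv : |u| < |v|) (hvw : |v| < |w|)
    (HA : (u + v + w) * (sp k0 * sp (k0 - 1)) < 0)
    (HB : 0 < (u*v + u*w + v*w) * (sp (k0 + 1) * sp (k0 - 1)))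
    (HC : (u*v*w) * (sp (k0 + 2) * sp (k0 - 1)) < 0) :
    ∃ (P : Polynomial ℝ) (γ : Fin d → ℝ), HypOrdered d P γ ∧ Realizes d P sp ∧
      ∀ hlt : d - k0 - 1 < d, (γ ⟨d - k0 - 1, hlt⟩ < 0 ↔ v < 0) := by
  have h0 : Aux d k0 sp v 0 := by
    refine ⟨fun _ => 0, 1, 0, by simp, by omega, by omega, le_refl _, by omega, ?_, by omega⟩
    intro j hj
    have : j = 0 := by omega
    subst this
    simp only [Polynomial.coeff_one_zero, mul_one, Nat.sub_zero]
    exact lt_of_lt_of_eq one_pos (sp_sq (hsp d le_rfl)).symm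
  have hbot : ∀ j, j ≤ d - k0 - 2 → Aux d k0 sp v j := by
    intro j
    induction j with
    | zero => exact fun _ => h0
    | succ n ih =>
      intro hn
      exact aux_step d k0 sp v hsp n (by omega) (Or.inl hn) (ih (by omega))
  have h1 : Aux d k0 sp v (d - k0 + 1) :=
    aux_triple d k0 sp u v w hsp hk0 hk0d hu huv hvw HA HB HC (hbot _ le_rfl)
  have htop : ∀ j, d - k0 + 1 ≤ j → j ≤ d → Aux d k0 sp v j := by
    intro j
    induction j with
    | zero => intro h _; omega
    | succ n ih =>
      intro hge hle
      rcases Nat.lt_or_ge n (d - k0 + 1) with h' | h'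
      · have : n + 1 = d - k0 + 1 := by omega
        rw [this]; exact h1
      · exact aux_step d k0 sp v hsp n (by omega) (Or.inr h') (ih h' (by omega))
  obtain ⟨γ, P, N, hP, hmono, hnz, _, _, hsign, hmid⟩ := htop d (by omega) le_rfl
  refine ⟨P, fun i => γ i, ⟨?_, ?_, ?_⟩, ?_, ?_⟩
  · rw [hP, Fin.prod_univ_eq_prod_range (fun i => X - C (γ i)) d]
  · intro j hj
    have := hsign j hj
    rw [Nat.sub_self, hsp0] at this
    exact coeff_ne_of_signpos this
  · intro a b hab
    exact hmono a b hab b.isLt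
  · intro t ht
    have := hsign (d - t) (by omega)
    rw [Nat.sub_self, hsp0] at this
    have heq : d - (d - t) = t := by omega
    rw [heq] at this
    linarith [this]
  · intro hlt
    exact hmid (by omega)

lemma neg_one_pow_cases (i : ℕ) : ((-1:ℝ))^i = 1 ∨ ((-1:ℝ))^i = -1 := by
  rcases Nat.even_or_odd i with h | h
  · exact Or.inl h.neg_one_pow
  · exact Or.inr h.neg_one_pow

lemma sp_block (d s : ℕ) (m : ℕ → ℕ) (sp : ℕ → ℝ) (hσ : IsSigmaOf d s m sp) :
    ∀ x ≤ d, ∃ i, i < s ∧ (∑ j ∈ range i, m j) ≤ x ∧ x < ∑ j ∈ range (i+1), m j := by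
  obtain ⟨h1, h2, h3⟩ := hσ
  intro x hx
  classical
  set i := Nat.findGreatest (fun i => ∑ j ∈ range i, m j ≤ x) s with hi
  have hspec : ∑ j ∈ range i, m j ≤ x :=
    Nat.findGreatest_spec (P := fun i => ∑ j ∈ range i, m j ≤ x) (Nat.zero_le s) (by simp)
  have hile : i ≤ s := Nat.findGreatest_le s
  have hine : i ≠ s := by
    intro h; rw [h, h2] at hspec; omega
  have hlt : i < s := by omega
  have hnot : ¬ (∑ j ∈ range (i+1), m j ≤ x) :=
    Nat.findGreatest_is_greatest (P := fun i => ∑ j ∈ range i, m j ≤ x) (n := s) (by omega) (by omega)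
  exact ⟨i, hlt, hspec, by omega⟩

lemma sp_pm (d s : ℕ) (m : ℕ → ℕ) (sp : ℕ → ℝ) (hσ : IsSigmaOf d s m sp) :
    ∀ x ≤ d, sp x = 1 ∨ sp x = -1 := by
  intro x hx
  obtain ⟨i, hi, hle, hlt⟩ := sp_block d s m sp hσ x hx
  rw [hσ.2.2 i x hi hle hlt]
  exact neg_one_pow_cases i


/-- a canonical sign pattern is of type 2.  Equivalently, if the sign
pattern `Σ_{m 0, …, m (s-1)}` has two consecutive components larger than `1`, or an
interior component equal to `2`, then it is not canonical: it is realized by two monic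
hyperbolic polynomials with nonzero coefficients and pairwise distinct moduli of roots
whose moduli of roots define two different orders. -/
theorem canonical_is_type2 (d s : ℕ) (m : ℕ → ℕ) (sp : ℕ → ℝ)
    (hσ : IsSigmaOf d s m sp)
    (h : (∃ i, i + 1 < s ∧ 1 < m i ∧ 1 < m (i + 1)) ∨
         (∃ i, 1 ≤ i ∧ i + 1 < s ∧ m i = 2)) :
    ∃ (P₁ P₂ : Polynomial ℝ) (γ₁ γ₂ : Fin d → ℝ),
      HypOrdered d P₁ γ₁ ∧ Realizes d P₁ sp ∧
      HypOrdered d P₂ γ₂ ∧ Realizes d P₂ sp ∧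
      ∃ i : Fin d, ¬ (γ₁ i < 0 ↔ γ₂ i < 0) := by
  obtain ⟨h1, h2, h3⟩ := hσ
  have hsp : ∀ x ≤ d, sp x = 1 ∨ sp x = -1 := sp_pm d s m sp ⟨h1, h2, h3⟩
  have hs1 : 1 ≤ s := by rcases h with ⟨i, hi, _⟩ | ⟨i, _, hi, _⟩ <;> omega
  have hsp0 : sp 0 = 1 := by
    have := h3 0 0 (by omega) (by simp) (by
      rw [Finset.sum_range_one]; exact h1 0 (by omega))
    rw [this, pow_zero]
  rcases h with ⟨i, hi1, hmi, hmi1⟩ | ⟨i, hi0, hi1, hmi⟩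
  · -- Case A : two consecutive blocks of length > 1
    set c := ∑ j ∈ range (i+1), m j with hc
    have hci : c = ∑ j ∈ range i, m j + m i := Finset.sum_range_succ m i
    have hcc : ∑ j ∈ range (i+2), m j = c + m (i+1) := Finset.sum_range_succ m (i+1)
    have hcc' : ∑ j ∈ range (i+1+1), m j = c + m (i+1) := hcc
    have htot : ∑ j ∈ range (i+2), m j ≤ d + 1 := by
      rw [← h2]
      exact Finset.sum_le_sum_of_subset (Finset.range_subset_range.mpr (by omega))
    have hc2 : 2 ≤ c := by omega
    have hcd : c + 1 ≤ d := by omega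
    have spA : sp (c-2) = (-1)^i := h3 i (c-2) (by omega) (by omega) (by omega)
    have spB : sp (c-1) = (-1)^i := h3 i (c-1) (by omega) (by omega) (by omega)
    have spC : sp c = (-1)^(i+1) := h3 (i+1) c hi1 (by omega) (by omega)
    have spD : sp (c+1) = (-1)^(i+1) := h3 (i+1) (c+1) hi1 (by omega) (by omega)
    have hsq : ((-1:ℝ))^i * ((-1:ℝ))^i = 1 := sp_sq (neg_one_pow_cases i)
    have hpow : ((-1:ℝ))^(i+1) = -((-1:ℝ))^i := by rw [pow_succ]; ring
    set k0 := c - 1 with hk0def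
    have hk0 : 1 ≤ k0 := by omega
    have hk0d : k0 + 2 ≤ d := by omega
    have idx1 : k0 - 1 = c - 2 := by omega
    have idx2 : k0 + 1 = c := by omega
    have idx3 : k0 + 2 = c + 1 := by omega
    have hprod1 : sp k0 * sp (k0-1) = 1 := by
      rw [idx1, hk0def, spA, spB]; exact hsq
    have hprod2 : sp (k0+1) * sp (k0-1) = -1 := by
      rw [idx1, idx2, spA, spC, hpow]; nlinarith [hsq]
    have hprod3 : sp (k0+2) * sp (k0-1) = -1 := by
      rw [idx1, idx3, spA, spD, hpow]; nlinarith [hsq]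
    obtain ⟨P₁, γ₁, hHO₁, hRe₁, hmid₁⟩ :=
      main_construct d k0 sp (-2) 3 (-4) hsp hsp0 hk0 hk0d (by norm_num) (by norm_num)
        (by norm_num) (by rw [hprod1]; norm_num) (by rw [hprod2]; norm_num)
        (by rw [hprod3]; norm_num)
    obtain ⟨P₂, γ₂, hHO₂, hRe₂, hmid₂⟩ :=
      main_construct d k0 sp (-2) (-3) 4 hsp hsp0 hk0 hk0d (by norm_num) (by norm_num)
        (by norm_num) (by rw [hprod1]; norm_num) (by rw [hprod2]; norm_num)
        (by rw [hprod3]; norm_num)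
    refine ⟨P₁, P₂, γ₁, γ₂, hHO₁, hRe₁, hHO₂, hRe₂, ⟨⟨d - k0 - 1, by omega⟩, ?_⟩⟩
    rw [hmid₁ (by omega), hmid₂ (by omega)]
    norm_num
  · -- Case B : an interior block of length 2
    set c := ∑ j ∈ range i, m j with hc
    have hc1 : 1 ≤ c := by
      have : m 0 ≤ ∑ j ∈ range i, m j :=
        Finset.single_le_sum (f := m) (fun _ _ => Nat.zero_le _)
          (Finset.mem_range.mpr (by omega))
      have := h1 0 (by omega)
      omega
    have hci : ∑ j ∈ range i, m j = ∑ j ∈ range (i-1), m j + m (i-1) := by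
      conv_lhs => rw [show i = (i-1)+1 from by omega]
      exact Finset.sum_range_succ m (i-1)
    have hmprev : 1 ≤ m (i-1) := h1 (i-1) (by omega)
    have hcc1 : ∑ j ∈ range (i+1), m j = c + 2 := by
      rw [Finset.sum_range_succ, hmi]
    have hcc2 : ∑ j ∈ range (i+2), m j = c + 2 + m (i+1) := by
      rw [Finset.sum_range_succ, hcc1]
    have hcc2' : ∑ j ∈ range (i+1+1), m j = c + 2 + m (i+1) := hcc2
    have hmnext : 1 ≤ m (i+1) := h1 (i+1) (by omega)
    have htot : ∑ j ∈ range (i+2), m j ≤ d + 1 := by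
      rw [← h2]
      exact Finset.sum_le_sum_of_subset (Finset.range_subset_range.mpr (by omega))
    have hcd : c + 2 ≤ d := by omega
    have spA : sp (c-1) = (-1)^(i-1) := h3 (i-1) (c-1) (by omega) (by omega)
      (by rw [show i-1+1 = i from by omega]; omega)
    have spB : sp c = (-1)^i := h3 i c (by omega) (by omega) (by omega)
    have spC : sp (c+1) = (-1)^i := h3 i (c+1) (by omega) (by omega) (by omega)
    have spD : sp (c+2) = (-1)^(i+1) := h3 (i+1) (c+2) hi1 (by omega) (by omega)
    have hsq : ((-1:ℝ))^(i-1) * ((-1:ℝ))^(i-1) = 1 := sp_sq (neg_one_pow_cases (i-1))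
    have hpowi : ((-1:ℝ))^i = -((-1:ℝ))^(i-1) := by
      conv_lhs => rw [show i = (i-1)+1 from by omega]
      rw [pow_succ]; ring
    have hpowi1 : ((-1:ℝ))^(i+1) = ((-1:ℝ))^(i-1) := by
      rw [pow_succ, hpowi]; ring
    set k0 := c with hk0def
    have hk0 : 1 ≤ k0 := hc1
    have hk0d : k0 + 2 ≤ d := hcd
    have hprod1 : sp k0 * sp (k0-1) = -1 := by
      rw [hk0def, spA, spB, hpowi]; nlinarith [hsq]
    have hprod2 : sp (k0+1) * sp (k0-1) = -1 := by
      rw [hk0def, spA, spC, hpowi]; nlinarith [hsq]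
    have hprod3 : sp (k0+2) * sp (k0-1) = 1 := by
      rw [hk0def, spA, spD, hpowi1]; exact hsq
    obtain ⟨P₁, γ₁, hHO₁, hRe₁, hmid₁⟩ :=
      main_construct d k0 sp 2 (-3) 4 hsp hsp0 hk0 hk0d (by norm_num) (by norm_num)
        (by norm_num) (by rw [hprod1]; norm_num) (by rw [hprod2]; norm_num)
        (by rw [hprod3]; norm_num)
    obtain ⟨P₂, γ₂, hHO₂, hRe₂, hmid₂⟩ :=
      main_construct d k0 sp (-3) 4 5 hsp hsp0 hk0 hk0d (by norm_num) (by norm_num)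
        (by norm_num) (by rw [hprod1]; norm_num) (by rw [hprod2]; norm_num)
        (by rw [hprod3]; norm_num)
    refine ⟨P₁, P₂, γ₁, γ₂, hHO₁, hRe₁, hHO₂, hRe₂, ⟨⟨d - k0 - 1, by omega⟩, ?_⟩⟩
    rw [hmid₁ (by omega), hmid₂ (by omega)]
    norm_num
end

section
/- The involutions ι_m and ι_r preserve the set of type 2 sign patterns of length d+1: a sign pattern σ is of type 2 if and only if ι_m(σ) is of type 2, and if and only if ι_r(σ) is of type 2. -/
open Polynomial

/-- A sign pattern `sp` of length `d+1` is of type 2 if, writing it as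
`Σ_{m 0, …, m (s-1)}`, (i) no two consecutive components are both larger than `1`,
and (ii) no interior component equals `2`. -/
def Type2 (d : ℕ) (sp : ℕ → ℝ) : Prop :=
  ∃ (s : ℕ) (m : ℕ → ℕ), IsSigmaOf d s m sp ∧
    (∀ i, i + 1 < s → m i ≤ 1 ∨ m (i + 1) ≤ 1) ∧
    (∀ i, 1 ≤ i → i + 1 < s → m i ≠ 2)

/-- The involution `ι_m`: the `k`-th entry (0-based) becomes `(-1)^k` times itself;
it corresponds to passing from `P` to `(-1)^d · P(-x)`. -/
def iotaM (sp : ℕ → ℝ) : ℕ → ℝ := fun k => (-1) ^ k * sp k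

/-- The involution `ι_r`: the sign pattern is reversed and normalized so as to begin
with `+1`; it corresponds to passing from `P` to `x^d · P(1/x) / P(0)`. -/
def iotaR (d : ℕ) (sp : ℕ → ℝ) : ℕ → ℝ := fun k => sp d * sp (d - k)

noncomputable def bidx (sp : ℕ → ℝ) (k : ℕ) : ℕ :=
  ((Finset.range k).filter (fun j => sp j ≠ sp (j+1))).card

lemma bidx_zero (sp : ℕ → ℝ) : bidx sp 0 = 0 := by simp [bidx]

lemma bidx_succ (sp : ℕ → ℝ) (k : ℕ) :
    bidx sp (k+1) = if sp k = sp (k+1) then bidx sp k else bidx sp k + 1 := by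
  by_cases h : sp k = sp (k+1)
  · simp [bidx, Finset.range_add_one, Finset.filter_insert, h]
  · simp [bidx, Finset.range_add_one, Finset.filter_insert, h,
      Finset.card_insert_of_notMem (by simp : k ∉ Finset.filter _ (Finset.range k))]

lemma bidx_mono (sp : ℕ → ℝ) : Monotone (bidx sp) := fun a b hab =>
  Finset.card_le_card (Finset.filter_subset_filter _ (Finset.range_subset_range.2 hab))

lemma sp_pow {d : ℕ} {sp : ℕ → ℝ} (hsp : IsSignPattern d sp) :
    ∀ k ≤ d, sp k = (-1) ^ (bidx sp k) := by
  intro k hk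
  induction k with
  | zero => simpa [bidx_zero] using hsp.1
  | succ n ih =>
    have hn : n ≤ d := by omega
    have ihn := ih hn
    rw [bidx_succ]
    by_cases h : sp n = sp (n+1)
    · rw [if_pos h, ← h]; exact ihn
    · rw [if_neg h, pow_succ, ← ihn]
      rcases hsp.2 n hn with h1 | h1 <;> rcases hsp.2 (n+1) hk with h2 | h2 <;>
        rw [h1, h2] at h ⊢ <;> norm_num at h <;> norm_num

lemma bidx_surj (sp : ℕ → ℝ) : ∀ d i, i ≤ bidx sp d → ∃ k ≤ d, bidx sp k = i := by
  intro d
  induction d with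
  | zero => intro i hi
            rw [bidx_zero] at hi
            exact ⟨0, le_rfl, by rw [bidx_zero]; omega⟩
  | succ n ih =>
    intro i hi
    by_cases h : i ≤ bidx sp n
    · obtain ⟨k, hk, hk2⟩ := ih i h
      exact ⟨k, hk.trans (Nat.le_succ n), hk2⟩
    · refine ⟨n+1, le_rfl, ?_⟩
      have hb := bidx_succ sp n
      split_ifs at hb <;> omega

lemma eq_range_card (T : Finset ℕ) (h : ∀ a b : ℕ, a ≤ b → b ∈ T → a ∈ T) :
    T = Finset.range T.card := by
  ext k
  simp only [Finset.mem_range]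
  constructor
  · intro hk
    have hsub : Finset.range (k+1) ⊆ T := fun a ha =>
      h a k (Nat.lt_succ_iff.mp (Finset.mem_range.mp ha)) hk
    have := Finset.card_le_card hsub
    simp only [Finset.card_range] at this
    omega
  · intro hk
    by_contra hkT
    have hsub : T ⊆ Finset.range k := by
      intro t ht
      rw [Finset.mem_range]
      by_contra h'
      exact hkT (h k t (le_of_not_gt h') ht)
    have := Finset.card_le_card hsub
    simp only [Finset.card_range] at this
    omega

def Local (d : ℕ) (sp : ℕ → ℝ) : Prop :=
  ∀ k, k + 3 ≤ d → sp k * sp (k+1) = sp (k+2) * sp (k+3) →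
    sp (k+1) * sp (k+2) = sp k * sp (k+1)

lemma neg_one_pow_mul_self (k : ℕ) : ((-1:ℝ))^k * (-1)^k = 1 := by
  rw [← pow_add, ← two_mul, pow_mul]; norm_num

lemma type2_of_local {d : ℕ} {sp : ℕ → ℝ} (hsp : IsSignPattern d sp)
    (hl : Local d sp) : Type2 d sp := by
  classical
  set m : ℕ → ℕ := fun i => ((Finset.range (d+1)).filter (fun k => bidx sp k = i)).card with hm
  set s : ℕ := bidx sp d + 1 with hs
  set S : ℕ → ℕ := fun i => ∑ j ∈ Finset.range i, m j with hSdef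
  -- card of filter (bidx < i)
  have cardlt : ∀ i, ((Finset.range (d+1)).filter (fun k => bidx sp k < i)).card = S i := by
    intro i
    induction i with
    | zero => simp [hSdef]
    | succ i ih =>
      have hsplit : (Finset.range (d+1)).filter (fun k => bidx sp k < i+1)
          = (Finset.range (d+1)).filter (fun k => bidx sp k < i)
            ∪ (Finset.range (d+1)).filter (fun k => bidx sp k = i) := by
        ext x
        simp only [Finset.mem_filter, Finset.mem_union, Finset.mem_range]
        omega
      have hdisj : Disjoint ((Finset.range (d+1)).filter (fun k => bidx sp k < i))
          ((Finset.range (d+1)).filter (fun k => bidx sp k = i)) := by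
        rw [Finset.disjoint_left]
        intro a ha hb
        simp only [Finset.mem_filter] at ha hb
        omega
      rw [hsplit, Finset.card_union_of_disjoint hdisj, ih, hSdef]
      simp only [Finset.sum_range_succ, hm]
  -- the filter is a range
  have filter_eq : ∀ i, (Finset.range (d+1)).filter (fun k => bidx sp k < i)
      = Finset.range (S i) := by
    intro i
    have hdc : ∀ a b : ℕ, a ≤ b →
        b ∈ (Finset.range (d+1)).filter (fun k => bidx sp k < i) →
        a ∈ (Finset.range (d+1)).filter (fun k => bidx sp k < i) := by
      intro a b hab hb
      simp only [Finset.mem_filter, Finset.mem_range] at hb ⊢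
      exact ⟨by omega, lt_of_le_of_lt (bidx_mono sp hab) hb.2⟩
    have := eq_range_card _ hdc
    rwa [cardlt i] at this
  have memS : ∀ k ≤ d, ∀ i, bidx sp k < i ↔ k < S i := by
    intro k hk i
    have h1 : k ∈ (Finset.range (d+1)).filter (fun x => bidx sp x < i)
        ↔ k ∈ Finset.range (S i) := by rw [filter_eq i]
    simp only [Finset.mem_filter, Finset.mem_range] at h1
    constructor
    · intro h; exact h1.1 ⟨by omega, h⟩
    · intro h; exact (h1.2 h).2
  have hSs : S s = d + 1 := by
    rw [← cardlt s, Finset.filter_true_of_mem, Finset.card_range]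
    intro k hk
    rw [Finset.mem_range] at hk
    have := bidx_mono sp (show k ≤ d by omega)
    omega
  have hSsucc : ∀ i, S (i+1) = S i + m i := by
    intro i; simp only [hSdef, Finset.sum_range_succ]
  have hSmono : Monotone S := fun a b hab =>
    Finset.sum_le_sum_of_subset (Finset.range_subset_range.2 hab)
  -- sp value on fiber
  have spval : ∀ i k, i < s → S i ≤ k → k < S (i+1) → sp k = (-1) ^ i := by
    intro i k his hlo hhi
    have hkd : k ≤ d := by
      have := hSmono (show i + 1 ≤ s by omega)
      omega
    have hb : bidx sp k = i := by
      have h1 : bidx sp k < i + 1 := (memS k hkd (i+1)).mpr hhi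
      have h2 : ¬ bidx sp k < i := fun h => absurd ((memS k hkd i).mp h) (not_lt.mpr hlo)
      omega
    rw [sp_pow hsp k hkd, hb]
  have hm1 : ∀ i < s, 1 ≤ m i := by
    intro i hi
    obtain ⟨k, hk, hbk⟩ := bidx_surj sp d i (by omega)
    have hmem : k ∈ (Finset.range (d+1)).filter (fun k => bidx sp k = i) :=
      Finset.mem_filter.2 ⟨Finset.mem_range.2 (by omega), hbk⟩
    exact Finset.card_pos.2 ⟨k, hmem⟩
  refine ⟨s, m, ⟨hm1, hSs, ?_⟩, ?_, ?_⟩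
  · intro i k his hlo hhi
    exact spval i k his hlo hhi
  · -- condition 1
    intro i hi
    by_contra hcon
    push_neg at hcon
    obtain ⟨h2i, h2i1⟩ := hcon
    obtain ⟨t, ht⟩ : ∃ t, m i = t + 2 := ⟨m i - 2, by omega⟩
    set k := S i + t with hk
    have his : i < s := by omega
    have hv0 : sp k = (-1) ^ i := spval i k his (by omega) (by rw [hSsucc]; omega)
    have hv1 : sp (k+1) = (-1) ^ i := spval i (k+1) his (by omega) (by rw [hSsucc]; omega)
    have hv2 : sp (k+2) = (-1) ^ (i+1) := by
      refine spval (i+1) (k+2) hi (by rw [hSsucc]; omega) ?_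
      rw [hSsucc, hSsucc]; omega
    have hv3 : sp (k+3) = (-1) ^ (i+1) := by
      refine spval (i+1) (k+3) hi (by rw [hSsucc]; omega) ?_
      rw [hSsucc, hSsucc]; omega
    have hkd : k + 3 ≤ d := by
      have h1 : k + 3 < S (i+2) := by rw [hSsucc, hSsucc]; omega
      have h2 : S (i+2) ≤ S s := hSmono (by omega)
      omega
    have := hl k hkd (by rw [hv0, hv1, hv2, hv3, neg_one_pow_mul_self,
      neg_one_pow_mul_self])
    rw [hv0, hv1, hv2] at this
    have hx := neg_one_pow_mul_self i
    simp only [pow_succ] at this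
    nlinarith [this, hx]
  · -- condition 2
    intro i h1i hi1
    by_contra hcon
    obtain ⟨j, rfl⟩ : ∃ j, i = j + 1 := ⟨i - 1, by omega⟩
    have hjs : j < s := by omega
    have hj1s : j + 1 < s := by omega
    have hj2s : j + 2 ≤ s := by omega
    have hS1 : 1 ≤ S (j+1) := by
      have := hm1 j hjs
      rw [hSsucc]
      have : 0 ≤ S j := Nat.zero_le _
      omega
    obtain ⟨k, hk⟩ : ∃ k, S (j+1) = k + 1 := ⟨S (j+1) - 1, by omega⟩
    have hmj : 1 ≤ m j := hm1 j hjs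
    have hv0 : sp k = (-1) ^ j := by
      refine spval j k hjs ?_ (by omega)
      rw [hSsucc] at hk; omega
    have hv1 : sp (k+1) = (-1) ^ (j+1) := by
      refine spval (j+1) (k+1) hj1s (by omega) ?_
      rw [hSsucc, hcon]; omega
    have hv2 : sp (k+2) = (-1) ^ (j+1) := by
      refine spval (j+1) (k+2) hj1s (by omega) ?_
      rw [hSsucc, hcon]; omega
    have hv3 : sp (k+3) = (-1) ^ (j+2) := by
      refine spval (j+2) (k+3) hi1 ?_ ?_
      · rw [hSsucc, hcon]; omega
      · rw [hSsucc, hSsucc (j+1), hcon]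
        have := hm1 (j+2) hi1
        omega
    have hkd : k + 3 ≤ d := by
      have h1 : k + 3 < S (j+3) := by
        rw [hSsucc, hSsucc (j+1), hcon]
        have := hm1 (j+2) hi1
        omega
      have h2 : S (j+3) ≤ S s := hSmono (by omega)
      omega
    have hant : sp k * sp (k+1) = sp (k+2) * sp (k+3) := by
      rw [hv0, hv1, hv2, hv3]
      have hx := neg_one_pow_mul_self j
      simp only [pow_succ]
      nlinarith [hx]
    have := hl k hkd hant
    rw [hv0, hv1, hv2] at this
    have hx := neg_one_pow_mul_self j
    simp only [pow_succ] at this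
    nlinarith [this, hx]

lemma local_of_type2 {d : ℕ} {sp : ℕ → ℝ} (ht : Type2 d sp) : Local d sp := by
  obtain ⟨s, m, ⟨hm1, hm2, hm3⟩, h1, h2⟩ := ht
  intro k hk hyp
  set S : ℕ → ℕ := fun i => ∑ j ∈ Finset.range i, m j with hSdef
  have hSmono : Monotone S := fun a b hab =>
    Finset.sum_le_sum_of_subset (Finset.range_subset_range.2 hab)
  have hSsucc : ∀ i, S (i+1) = S i + m i := by
    intro i; simp only [hSdef, Finset.sum_range_succ]
  have hSs : S s = d + 1 := hm2
  have hs0 : 0 < s := by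
    by_contra h
    have : s = 0 := by omega
    rw [this] at hSs
    simp [hSdef] at hSs
  have block : ∀ x ≤ d, ∃ i, i < s ∧ S i ≤ x ∧ x < S (i+1) := by
    intro x hx
    have hex : ∃ i, x < S (i + 1) := by
      refine ⟨s - 1, ?_⟩
      have : s - 1 + 1 = s := by omega
      rw [this, hSs]; omega
    set i := Nat.find hex with hi
    have hfound : x < S (i+1) := Nat.find_spec hex
    have hSi : S i ≤ x := by
      rcases Nat.eq_zero_or_pos i with h0 | h0
      · rw [h0]; simp [hSdef]
      · have := Nat.find_min hex (show i - 1 < i by omega)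
        have heq : i - 1 + 1 = i := by omega
        rw [heq] at this
        omega
    have his : i < s := by
      have hP : x < S (s - 1 + 1) := by
        have : s - 1 + 1 = s := by omega
        rw [this, hSs]; omega
      have := Nat.find_min' hex hP
      omega
    exact ⟨i, his, hSi, hfound⟩
  have step : ∀ x i i', i < s → S i ≤ x → x < S (i+1) → i' < s → S i' ≤ x + 1 →
      x + 1 < S (i'+1) → i' = i ∨ i' = i + 1 := by
    intro x i i' his hl1 hr1 his' hl2 hr2
    have hle : i ≤ i' := by
      by_contra h
      have : i' + 1 ≤ i := by omega
      have := hSmono this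
      omega
    have hge : i' ≤ i + 1 := by
      by_contra h
      have hii : i + 2 ≤ i' := by omega
      have hm' : 1 ≤ m (i+1) := hm1 (i+1) (by omega)
      have hA : S (i+2) ≤ S i' := hSmono hii
      have hB : S (i+2) = S (i+1) + m (i+1) := hSsucc (i+1)
      omega
    omega
  obtain ⟨i0, hi0s, hi0l, hi0r⟩ := block k (by omega)
  obtain ⟨i1, hi1s, hi1l, hi1r⟩ := block (k+1) (by omega)
  obtain ⟨i2, hi2s, hi2l, hi2r⟩ := block (k+2) (by omega)
  obtain ⟨i3, hi3s, hi3l, hi3r⟩ := block (k+3) (by omega)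
  have v0 : sp k = (-1) ^ i0 := hm3 i0 k hi0s hi0l hi0r
  have v1 : sp (k+1) = (-1) ^ i1 := hm3 i1 (k+1) hi1s hi1l hi1r
  have v2 : sp (k+2) = (-1) ^ i2 := hm3 i2 (k+2) hi2s hi2l hi2r
  have v3 : sp (k+3) = (-1) ^ i3 := hm3 i3 (k+3) hi3s hi3l hi3r
  have e1 := step k i0 i1 hi0s hi0l hi0r hi1s hi1l hi1r
  have e2 := step (k+1) i1 i2 hi1s hi1l hi1r hi2s hi2l hi2r
  have e3 := step (k+2) i2 i3 hi2s hi2l hi2r hi3s hi3l hi3r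
  rw [v0, v1, v2, v3] at hyp
  rw [v0, v1, v2]
  rcases e1 with rfl | rfl
  · rcases e2 with rfl | rfl
    · -- (0,0,*) : conclusion trivial
      rfl
    · rcases e3 with rfl | rfl
      · -- (0,1,0) : case A, contradicts h1
        exfalso
        have hmi : 2 ≤ m i1 := by
          have := hSsucc i1
          omega
        have hmi1 : 2 ≤ m (i1+1) := by
          have := hSsucc (i1+1)
          omega
        rcases h1 i1 hi3s with h | h <;> omega
      · -- (0,1,1) : hypothesis impossible
        exfalso
        have hx := neg_one_pow_mul_self i1
        simp only [pow_succ] at hyp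
        nlinarith [hyp, hx]
  · rcases e2 with rfl | rfl
    · rcases e3 with rfl | rfl
      · -- (1,0,0) : hypothesis impossible
        exfalso
        have hx := neg_one_pow_mul_self i0
        simp only [pow_succ] at hyp
        nlinarith [hyp, hx]
      · -- (1,0,1) : case B, contradicts h2
        exfalso
        have hA : S (i0+1) = k + 1 := by omega
        have hB : S (i0+1+1) = k + 3 := by omega
        have hmi : m (i0+1) = 2 := by
          have hC : S (i0+1+1) = S (i0+1) + m (i0+1) := hSsucc (i0+1)
          omega
        exact h2 (i0+1) (by omega) hi3s hmi
    · -- (1,1,*) : conclusion trivial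
      simp only [pow_succ]
      ring


lemma iotaM_mul (sp : ℕ → ℝ) (k : ℕ) :
    iotaM sp k * iotaM sp (k+1) = -(sp k * sp (k+1)) := by
  have h := neg_one_pow_mul_self k
  simp only [iotaM, pow_succ]
  linear_combination (-(sp k * sp (k+1))) * h

lemma iotaM_invol (sp : ℕ → ℝ) : iotaM (iotaM sp) = sp := by
  funext k
  simp only [iotaM, ← mul_assoc, neg_one_pow_mul_self, one_mul]

lemma iotaR_mul (d : ℕ) (sp : ℕ → ℝ) (hd : sp d * sp d = 1) (k : ℕ) :
    iotaR d sp k * iotaR d sp (k+1) = sp (d - (k+1)) * sp (d - k) := by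
  simp only [iotaR]
  linear_combination (sp (d - (k+1)) * sp (d - k)) * hd

lemma isSignPattern_iotaM {d : ℕ} {sp : ℕ → ℝ} (hsp : IsSignPattern d sp) :
    IsSignPattern d (iotaM sp) := by
  refine ⟨by simp [iotaM, hsp.1], fun k hk => ?_⟩
  rcases hsp.2 k hk with h | h <;> rcases Nat.even_or_odd k with he | he <;>
    simp [iotaM, h, he.neg_one_pow]

lemma isSignPattern_iotaR {d : ℕ} {sp : ℕ → ℝ} (hsp : IsSignPattern d sp) :
    IsSignPattern d (iotaR d sp) := by
  have hd := hsp.2 d le_rfl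
  constructor
  · simp only [iotaR, Nat.sub_zero]
    rcases hd with h | h <;> rw [h] <;> norm_num
  · intro k hk
    have h2 := hsp.2 (d - k) (by omega)
    rcases hd with h | h <;> rcases h2 with h' | h' <;> simp [iotaR, h, h']

lemma localM {d : ℕ} {sp : ℕ → ℝ} (h : Local d sp) : Local d (iotaM sp) := by
  intro k hk hyp
  have p0 : iotaM sp k * iotaM sp (k+1) = -(sp k * sp (k+1)) := iotaM_mul sp k
  have p1 : iotaM sp (k+1) * iotaM sp (k+2) = -(sp (k+1) * sp (k+2)) := iotaM_mul sp (k+1)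
  have p2 : iotaM sp (k+2) * iotaM sp (k+3) = -(sp (k+2) * sp (k+3)) := iotaM_mul sp (k+2)
  rw [p0, p2] at hyp
  rw [p0, p1]
  have := h k hk (by linarith)
  linarith

lemma localM_iff {d : ℕ} {sp : ℕ → ℝ} : Local d sp ↔ Local d (iotaM sp) := by
  constructor
  · exact localM
  · intro h
    have := localM h
    rwa [iotaM_invol] at this

lemma localR {d : ℕ} {sp : ℕ → ℝ} (hd : sp d * sp d = 1) (h : Local d sp) :
    Local d (iotaR d sp) := by
  intro k hk hyp
  set j := d - (k+3) with hj
  have hjd : j + 3 ≤ d := by omega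
  have p0 : iotaR d sp k * iotaR d sp (k+1) = sp (j+2) * sp (j+3) := by
    rw [iotaR_mul d sp hd k, show d - (k+1) = j + 2 by omega, show d - k = j + 3 by omega]
  have p1 : iotaR d sp (k+1) * iotaR d sp (k+2) = sp (j+1) * sp (j+2) := by
    have := iotaR_mul d sp hd (k+1)
    rw [show d - (k+1+1) = j + 1 by omega, show d - (k+1) = j + 2 by omega] at this
    exact this
  have p2 : iotaR d sp (k+2) * iotaR d sp (k+3) = sp j * sp (j+1) := by
    have := iotaR_mul d sp hd (k+2)
    rw [show d - (k+2+1) = j by omega, show d - (k+2) = j + 1 by omega] at this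
    exact this
  rw [p0, p2] at hyp
  rw [p1, p0]
  have := h j hjd hyp.symm
  rw [this, hyp]

lemma localR' {d : ℕ} {sp : ℕ → ℝ} (hd : sp d * sp d = 1)
    (h : Local d (iotaR d sp)) : Local d sp := by
  intro j hj hyp
  set k := d - (j+3) with hk
  have hkd : k + 3 ≤ d := by omega
  have p0 : iotaR d sp k * iotaR d sp (k+1) = sp (j+2) * sp (j+3) := by
    rw [iotaR_mul d sp hd k, show d - (k+1) = j + 2 by omega, show d - k = j + 3 by omega]
  have p1 : iotaR d sp (k+1) * iotaR d sp (k+2) = sp (j+1) * sp (j+2) := by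
    have := iotaR_mul d sp hd (k+1)
    rw [show d - (k+1+1) = j + 1 by omega, show d - (k+1) = j + 2 by omega] at this
    exact this
  have p2 : iotaR d sp (k+2) * iotaR d sp (k+3) = sp j * sp (j+1) := by
    have := iotaR_mul d sp hd (k+2)
    rw [show d - (k+2+1) = j by omega, show d - (k+2) = j + 1 by omega] at this
    exact this
  have H := h k hkd
  rw [p0, p1, p2] at H
  have := H hyp.symm
  rw [this, ← hyp]

/-- the involutions `ι_m` and `ι_r` preserve the set of type 2 sign
patterns of length `d+1`. -/
theorem iota_preserve_type2 (d : ℕ) (sp : ℕ → ℝ) (hsp : IsSignPattern d sp) :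
    (Type2 d sp ↔ Type2 d (iotaM sp)) ∧ (Type2 d sp ↔ Type2 d (iotaR d sp)) := by
  have hd : sp d * sp d = 1 := by
    rcases hsp.2 d le_rfl with h | h <;> rw [h] <;> norm_num
  constructor
  · constructor
    · intro h
      exact type2_of_local (isSignPattern_iotaM hsp) (localM_iff.mp (local_of_type2 h))
    · intro h
      exact type2_of_local hsp (localM_iff.mpr (local_of_type2 h))
  · constructor
    · intro h
      exact type2_of_local (isSignPattern_iotaR hsp) (localR hd (local_of_type2 h))
    · intro h
      exact type2_of_local hsp (localR' hd (local_of_type2 h))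
end

section
/- Let r ≥ 2 and ℓ be integers with r²−2 < ℓ < (r+1)²−2 and ℓ−r odd, and let c_j denote the coefficient of x^j in the polynomial (x−1)²(x+1)^ℓ. Then all coefficients c_0, ..., c_{ℓ+2} are nonzero; moreover c_j > 0 for j ≤ (ℓ−r+1)/2 and for j ≥ (ℓ+r+3)/2, and c_j < 0 for (ℓ−r+1)/2 < j < (ℓ+r+3)/2. In particular the sequence of coefficients, read from the leading one, consists of (ℓ−r+3)/2 positive entries, then r negative entries, then (ℓ−r+3)/2 positive entries. -/
open Polynomial Nat

lemma lemA (a b : ℕ) : (a+b).choose a * (a.factorial * (b+2).factorial)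
    = (a+b).factorial * ((b+1)*(b+2)) := by
  rw [factorial_succ, factorial_succ, ← Nat.choose_mul_factorial_mul_factorial (Nat.le_add_right a b)]
  simp only [Nat.add_sub_cancel_left]
  ring

lemma lemB (a b : ℕ) : (a+b).choose a * ((a+1).factorial * (b+1).factorial)
    = (a+b).factorial * ((a+1)*(b+1)) := by
  rw [factorial_succ, factorial_succ, ← Nat.choose_mul_factorial_mul_factorial (Nat.le_add_right a b)]
  simp only [Nat.add_sub_cancel_left]
  ring

lemma lemC (a b : ℕ) : (a+b).choose a * ((a+2).factorial * b.factorial)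
    = (a+b).factorial * ((a+1)*(a+2)) := by
  rw [factorial_succ, factorial_succ, ← Nat.choose_mul_factorial_mul_factorial (Nat.le_add_right a b)]
  simp only [Nat.add_sub_cancel_left]
  ring

lemma coeff_formula (ℓ d : ℕ) : ((X - 1) ^ 2 * (X + 1) ^ ℓ : Polynomial ℤ).coeff (d+2)
    = (ℓ.choose (d+2) : ℤ) - 2 * ℓ.choose (d+1) + ℓ.choose d := by
  have h : ((X - 1) ^ 2 * (X + 1) ^ ℓ : Polynomial ℤ)
      = X^2 * (X+1)^ℓ - (X * (X+1)^ℓ + X * (X+1)^ℓ) + (X+1)^ℓ := by ring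
  rw [h]
  simp [coeff_X_pow_mul, coeff_X_mul, coeff_X_add_one_pow]
  ring

lemma key (ℓ j : ℕ) (hj : j ≤ ℓ + 2) :
    ((X - 1) ^ 2 * (X + 1) ^ ℓ : Polynomial ℤ).coeff j *
      ((j.factorial : ℤ) * (ℓ + 2 - j).factorial) =
    (ℓ.factorial : ℤ) * ((2*(j:ℤ) - ℓ - 2)^2 - ((ℓ:ℤ) + 2)) := by
  match j, hj with
  | 0, _ =>
    have hc : ((X - 1) ^ 2 * (X + 1) ^ ℓ : Polynomial ℤ).coeff 0 = 1 := by
      rw [coeff_zero_eq_eval_zero]; simp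
    have hf : ((ℓ+2).factorial : ℤ) = (ℓ+2) * ((ℓ+1) * ℓ.factorial) := by
      rw [factorial_succ, factorial_succ]; push_cast; ring
    rw [hc]
    simp only [Nat.sub_zero, Nat.factorial_zero]
    rw [hf]; push_cast; ring
  | 1, hj =>
    have hc : ((X - 1) ^ 2 * (X + 1) ^ ℓ : Polynomial ℤ).coeff 1 = (ℓ : ℤ) - 2 := by
      have h : ((X - 1) ^ 2 * (X + 1) ^ ℓ : Polynomial ℤ)
          = (X+1)^ℓ * X^2 - ((X+1)^ℓ * X^1 + (X+1)^ℓ * X^1) + (X+1)^ℓ := by ring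
      rw [h]
      simp [coeff_mul_X_pow', coeff_X_add_one_pow]
      ring
    have e : ℓ + 2 - 1 = ℓ + 1 := by omega
    have hf : ((ℓ+1).factorial : ℤ) = (ℓ+1) * ℓ.factorial := by
      rw [factorial_succ]; push_cast; ring
    rw [hc, e]
    simp only [Nat.factorial_one]
    rw [hf]; push_cast; ring
  | (d+2), hj =>
    rw [coeff_formula]
    have hd : d ≤ ℓ := by omega
    obtain ⟨m, rfl⟩ : ∃ m, ℓ = d + m := ⟨ℓ - d, by omega⟩
    have e : d + m + 2 - (d + 2) = m := by omega
    rw [e]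
    match m with
    | 0 =>
      have h2 : (d+0).choose (d+2) = 0 := Nat.choose_eq_zero_of_lt (by omega)
      have h1 : (d+0).choose (d+1) = 0 := Nat.choose_eq_zero_of_lt (by omega)
      have h0 := lemC d 0
      rw [h2, h1]
      have h0' : ((d+0).choose d : ℤ) * ((d+2).factorial * Nat.factorial 0)
          = ((d+0).factorial : ℤ) * ((d+1)*(d+2)) := by exact_mod_cast congrArg (Nat.cast (R := ℤ)) h0
      push_cast at h0' ⊢
      nlinarith [h0']
    | 1 =>
      have h2 : (d+1).choose (d+2) = 0 := Nat.choose_eq_zero_of_lt (by omega)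
      have hB := lemB (d+1) 0
      have hC := lemC d 1
      have hB' := congrArg (Nat.cast (R := ℤ)) hB
      have hC' := congrArg (Nat.cast (R := ℤ)) hC
      push_cast at hB' hC'
      rw [h2]
      push_cast
      have e1 : d + 1 + 0 = d + 1 := by omega
      rw [e1] at hB'
      nlinarith [hB', hC']
    | (m'+2) =>
      have hA := lemA (d+2) m'
      have hB := lemB (d+1) (m'+1)
      have hC := lemC d (m'+2)
      have hA' := congrArg (Nat.cast (R := ℤ)) hA
      have hB' := congrArg (Nat.cast (R := ℤ)) hB
      have hC' := congrArg (Nat.cast (R := ℤ)) hC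
      push_cast at hA' hB' hC'
      have e1 : d + 2 + m' = d + (m'+2) := by omega
      have e2 : d + 1 + (m'+1) = d + (m'+2) := by omega
      rw [e1] at hA'
      rw [e2] at hB'
      push_cast
      linarith [hA', hB', hC']

set_option maxHeartbeats 1000000 in
/-- part (1) of Lemma 1: for `r ≥ 2`, `r² - 2 < ℓ < (r+1)² - 2` and
`ℓ - r` odd, all coefficients of `(x-1)²(x+1)^ℓ` are nonzero; the coefficient of `x^j`
is positive for `j ≤ (ℓ-r+1)/2` and for `j ≥ (ℓ+r+3)/2`, and negative in between.
In particular, read from the leading coefficient, the signs form `(ℓ-r+3)/2` positive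
entries, then `r` negative entries, then `(ℓ-r+3)/2` positive entries. -/
theorem coeff_signs_odd_case (r ℓ : ℕ) (hr : 2 ≤ r)
    (hℓ₁ : r ^ 2 - 2 < ℓ) (hℓ₂ : ℓ < (r + 1) ^ 2 - 2) (hodd : Odd (ℓ - r)) :
    (∀ j ≤ ℓ + 2, ((X - 1) ^ 2 * (X + 1) ^ ℓ : Polynomial ℤ).coeff j ≠ 0) ∧
    (∀ j, j ≤ (ℓ - r + 1) / 2 →
      0 < ((X - 1) ^ 2 * (X + 1) ^ ℓ : Polynomial ℤ).coeff j) ∧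
    (∀ j, (ℓ + r + 3) / 2 ≤ j → j ≤ ℓ + 2 →
      0 < ((X - 1) ^ 2 * (X + 1) ^ ℓ : Polynomial ℤ).coeff j) ∧
    (∀ j, (ℓ - r + 1) / 2 < j → j < (ℓ + r + 3) / 2 →
      ((X - 1) ^ 2 * (X + 1) ^ ℓ : Polynomial ℤ).coeff j < 0) := by
  obtain ⟨k, hk⟩ := hodd
  rw [sq] at hℓ₁ hℓ₂
  have h4 : 2 * 2 ≤ r * r := Nat.mul_le_mul hr hr
  have hrr : r * r < ℓ + 2 := by omega
  have hRR : ℓ + 2 < (r + 1) * (r + 1) := by omega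
  have h2r : 2 * r ≤ r * r := Nat.mul_le_mul_right r hr
  have hlr : r + 1 ≤ ℓ := by omega
  have hℓk : ℓ = r + 2 * k + 1 := by omega
  have hZ1 : ((r:ℤ)) * r < (ℓ:ℤ) + 2 := by exact_mod_cast hrr
  have hZ2 : (ℓ:ℤ) + 2 < ((r:ℤ) + 1) * ((r:ℤ) + 1) := by exact_mod_cast hRR
  have hZℓ : (ℓ:ℤ) = (r:ℤ) + 2 * k + 1 := by exact_mod_cast hℓk
  have hZr : (2:ℤ) ≤ (r:ℤ) := by exact_mod_cast hr
  have hdiv1 : (ℓ - r + 1) / 2 = k + 1 := by omega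
  have hdiv2 : (ℓ + r + 3) / 2 = r + k + 2 := by omega
  have hfac : (0:ℤ) < (ℓ.factorial : ℤ) := by exact_mod_cast ℓ.factorial_pos
  -- generic sign transfer
  have sign_pos : ∀ j, j ≤ ℓ + 2 → 0 < (2*(j:ℤ) - ℓ - 2)^2 - ((ℓ:ℤ) + 2) →
      0 < ((X - 1) ^ 2 * (X + 1) ^ ℓ : Polynomial ℤ).coeff j := by
    intro j hjle hQ
    have hkey := key ℓ j hjle
    have hF : (0:ℤ) < (j.factorial : ℤ) * ((ℓ+2-j).factorial : ℤ) := by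
      exact_mod_cast Nat.mul_pos j.factorial_pos (ℓ+2-j).factorial_pos
    have hprod : 0 < ((X - 1) ^ 2 * (X + 1) ^ ℓ : Polynomial ℤ).coeff j *
        ((j.factorial : ℤ) * (ℓ + 2 - j).factorial) := hkey ▸ mul_pos hfac hQ
    rcases mul_pos_iff.mp hprod with ⟨h, _⟩ | ⟨_, h⟩
    · exact h
    · exact absurd hF (not_lt.mpr h.le)
  have sign_neg : ∀ j, j ≤ ℓ + 2 → (2*(j:ℤ) - ℓ - 2)^2 - ((ℓ:ℤ) + 2) < 0 →
      ((X - 1) ^ 2 * (X + 1) ^ ℓ : Polynomial ℤ).coeff j < 0 := by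
    intro j hjle hQ
    have hkey := key ℓ j hjle
    have hF : (0:ℤ) < (j.factorial : ℤ) * ((ℓ+2-j).factorial : ℤ) := by
      exact_mod_cast Nat.mul_pos j.factorial_pos (ℓ+2-j).factorial_pos
    have hprod : ((X - 1) ^ 2 * (X + 1) ^ ℓ : Polynomial ℤ).coeff j *
        ((j.factorial : ℤ) * (ℓ + 2 - j).factorial) < 0 :=
      hkey ▸ mul_neg_of_pos_of_neg hfac hQ
    rcases mul_neg_iff.mp hprod with ⟨_, h⟩ | ⟨h, _⟩
    · exact absurd hF (not_lt.mpr h.le)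
    · exact h
  have P1 : ∀ j, j ≤ (ℓ - r + 1) / 2 →
      0 < ((X - 1) ^ 2 * (X + 1) ^ ℓ : Polynomial ℤ).coeff j := by
    intro j hj
    rw [hdiv1] at hj
    have hjZ : (j:ℤ) ≤ (k:ℤ) + 1 := by exact_mod_cast hj
    refine sign_pos j (by omega) ?_
    nlinarith [sq_nonneg (2*(j:ℤ) - ℓ - 2 + r + 1)]
  have P2 : ∀ j, (ℓ + r + 3) / 2 ≤ j → j ≤ ℓ + 2 →
      0 < ((X - 1) ^ 2 * (X + 1) ^ ℓ : Polynomial ℤ).coeff j := by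
    intro j hj hjle
    rw [hdiv2] at hj
    have hjZ : (r:ℤ) + k + 2 ≤ (j:ℤ) := by exact_mod_cast hj
    refine sign_pos j hjle ?_
    nlinarith [sq_nonneg (2*(j:ℤ) - ℓ - 2 - r - 1)]
  have P3 : ∀ j, (ℓ - r + 1) / 2 < j → j < (ℓ + r + 3) / 2 →
      ((X - 1) ^ 2 * (X + 1) ^ ℓ : Polynomial ℤ).coeff j < 0 := by
    intro j hj1 hj2
    rw [hdiv1] at hj1
    rw [hdiv2] at hj2
    have hjZ1 : (k:ℤ) + 2 ≤ (j:ℤ) := by exact_mod_cast hj1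
    have hjZ2 : (j:ℤ) ≤ (r:ℤ) + k + 1 := by
      have : j ≤ r + k + 1 := by omega
      exact_mod_cast this
    refine sign_neg j (by omega) ?_
    nlinarith [mul_nonneg (show (0:ℤ) ≤ (r:ℤ) - 1 - (2*(j:ℤ) - ℓ - 2) by linarith)
      (show (0:ℤ) ≤ (r:ℤ) - 1 + (2*(j:ℤ) - ℓ - 2) by linarith), hZ1, hZr]
  refine ⟨?_, P1, P2, P3⟩
  intro j hjle
  rcases (by omega : j ≤ (ℓ - r + 1) / 2 ∨ ((ℓ - r + 1) / 2 < j ∧ j < (ℓ + r + 3) / 2) ∨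
      (ℓ + r + 3) / 2 ≤ j) with h | ⟨h1, h2⟩ | h
  · exact ne_of_gt (P1 j h)
  · exact ne_of_lt (P3 j h1 h2)
  · exact ne_of_gt (P2 j h hjle)
end

section
/- Let r ≥ 2 and ℓ be integers with r²−2 < ℓ < (r+1)²−2 and ℓ−r even, and let c_j denote the coefficient of x^j in the polynomial (x−1)²(x+1)^ℓ. Then all coefficients c_0, ..., c_{ℓ+2} are nonzero; moreover c_j > 0 for j ≤ (ℓ−r)/2 and for j ≥ (ℓ+r+4)/2, and c_j < 0 for (ℓ−r)/2 < j < (ℓ+r+4)/2. In particular the sequence of coefficients, read from the leading one, consists of (ℓ−r+2)/2 positive entries, then r+1 negative entries, then (ℓ−r+2)/2 positive entries. -/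
open Polynomial

lemma coeff_signs_coeff_eq (ℓ : ℕ) (j : ℕ) :
    ((X - 1) ^ 2 * (X + 1) ^ ℓ : Polynomial ℤ).coeff j
      = ((ℓ+2).choose j : ℤ) - 4 * (if j = 0 then 0 else (ℓ.choose (j-1) : ℤ)) := by
  have h : ((X - 1) ^ 2 * (X + 1) ^ ℓ : Polynomial ℤ)
      = (X + 1) ^ (ℓ + 2) - C 4 * ((X + 1) ^ ℓ * X) := by
    have : (C 4 : Polynomial ℤ) = 4 := by norm_num
    rw [this]; ring
  rw [h, coeff_sub, coeff_X_add_one_pow, coeff_C_mul]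
  cases j with
  | zero => simp
  | succ k => simp [coeff_mul_X, coeff_X_add_one_pow]

lemma coeff_signs_choose_ratio (ℓ k : ℕ) :
    (k+1) * (ℓ + 1 - k) * (ℓ+2).choose (k+1) = (ℓ+2) * (ℓ+1) * ℓ.choose k := by
  have h1 : (ℓ+2) * (ℓ+1).choose k = (ℓ+2).choose (k+1) * (k+1) :=
    Nat.add_one_mul_choose_eq (ℓ+1) k
  have h2 : ℓ.choose k * (ℓ+1) = (ℓ+1).choose k * (ℓ+1-k) :=
    Nat.choose_mul_succ_eq ℓ k
  calc (k+1) * (ℓ + 1 - k) * (ℓ+2).choose (k+1)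
      = (ℓ+1-k) * ((ℓ+2).choose (k+1) * (k+1)) := by ring
    _ = (ℓ+1-k) * ((ℓ+2) * (ℓ+1).choose k) := by rw [h1]
    _ = (ℓ+2) * ((ℓ+1).choose k * (ℓ+1-k)) := by ring
    _ = (ℓ+2) * (ℓ.choose k * (ℓ+1)) := by rw [h2]
    _ = (ℓ+2) * (ℓ+1) * ℓ.choose k := by ring

lemma coeff_signs_pos_aux (ℓ k : ℕ) (hk : k ≤ ℓ)
    (h : 4 * ((k+1) * (ℓ+1-k)) < (ℓ+2)*(ℓ+1)) :
    4 * ℓ.choose k < (ℓ+2).choose (k+1) := by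
  have hA : 0 < ℓ.choose k := Nat.choose_pos hk
  have key := coeff_signs_choose_ratio ℓ k
  by_contra hle
  push_neg at hle
  have h1 : (k+1) * (ℓ+1-k) * (ℓ+2).choose (k+1) ≤ (k+1) * (ℓ+1-k) * (4 * ℓ.choose k) :=
    Nat.mul_le_mul_left _ hle
  rw [key] at h1
  have h2 : (k+1) * (ℓ+1-k) * (4 * ℓ.choose k) < (ℓ+2) * (ℓ+1) * ℓ.choose k := by
    have := (Nat.mul_lt_mul_right hA).mpr h
    calc (k+1) * (ℓ+1-k) * (4 * ℓ.choose k)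
        = 4 * ((k+1) * (ℓ+1-k)) * ℓ.choose k := by ring
      _ < (ℓ+2) * (ℓ+1) * ℓ.choose k := this
  omega

lemma coeff_signs_neg_aux (ℓ k : ℕ) (hk : k ≤ ℓ)
    (h : (ℓ+2)*(ℓ+1) < 4 * ((k+1) * (ℓ+1-k))) :
    (ℓ+2).choose (k+1) < 4 * ℓ.choose k := by
  have hA : 0 < ℓ.choose k := Nat.choose_pos hk
  have key := coeff_signs_choose_ratio ℓ k
  by_contra hle
  push_neg at hle
  have h1 : (k+1) * (ℓ+1-k) * (4 * ℓ.choose k) ≤ (k+1) * (ℓ+1-k) * (ℓ+2).choose (k+1) :=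
    Nat.mul_le_mul_left _ hle
  rw [key] at h1
  have h2 : (ℓ+2) * (ℓ+1) * ℓ.choose k < (k+1) * (ℓ+1-k) * (4 * ℓ.choose k) := by
    have := (Nat.mul_lt_mul_right hA).mpr h
    calc (ℓ+2) * (ℓ+1) * ℓ.choose k
        < 4 * ((k+1) * (ℓ+1-k)) * ℓ.choose k := this
      _ = (k+1) * (ℓ+1-k) * (4 * ℓ.choose k) := by ring
  omega

/-- part (2) of Lemma 1: for `r ≥ 2`, `r² - 2 < ℓ < (r+1)² - 2` and
`ℓ - r` even, all coefficients of `(x-1)²(x+1)^ℓ` are nonzero; the coefficient of `x^j`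
is positive for `j ≤ (ℓ-r)/2` and for `j ≥ (ℓ+r+4)/2`, and negative in between.
In particular, read from the leading coefficient, the signs form `(ℓ-r+2)/2` positive
entries, then `r+1` negative entries, then `(ℓ-r+2)/2` positive entries. -/
theorem coeff_signs_even_case (r ℓ : ℕ) (hr : 2 ≤ r)
    (hℓ₁ : r ^ 2 - 2 < ℓ) (hℓ₂ : ℓ < (r + 1) ^ 2 - 2) (heven : Even (ℓ - r)) :
    (∀ j ≤ ℓ + 2, ((X - 1) ^ 2 * (X + 1) ^ ℓ : Polynomial ℤ).coeff j ≠ 0) ∧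
    (∀ j, j ≤ (ℓ - r) / 2 →
      0 < ((X - 1) ^ 2 * (X + 1) ^ ℓ : Polynomial ℤ).coeff j) ∧
    (∀ j, (ℓ + r + 4) / 2 ≤ j → j ≤ ℓ + 2 →
      0 < ((X - 1) ^ 2 * (X + 1) ^ ℓ : Polynomial ℤ).coeff j) ∧
    (∀ j, (ℓ - r) / 2 < j → j < (ℓ + r + 4) / 2 →
      ((X - 1) ^ 2 * (X + 1) ^ ℓ : Polynomial ℤ).coeff j < 0) := by
  -- basic bounds
  have hrsq : r + 2 ≤ r ^ 2 := by nlinarith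
  have hlb : r ^ 2 < ℓ + 2 := by omega
  have hub : ℓ + 2 < (r + 1) ^ 2 := by
    have : 2 ≤ (r+1)^2 := by nlinarith
    omega
  have hrl : r < ℓ := by nlinarith
  obtain ⟨m, hm⟩ := heven
  have hℓm : ℓ = r + 2 * m := by omega
  have e1 : (ℓ - r) / 2 = m := by omega
  have e2 : (ℓ + r + 4) / 2 = r + m + 2 := by omega
  -- positivity for low indices
  have hpos1 : ∀ j, j ≤ m →
      0 < ((X - 1) ^ 2 * (X + 1) ^ ℓ : Polynomial ℤ).coeff j := by
    intro j hj
    rw [coeff_signs_coeff_eq]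
    cases j with
    | zero => simp
    | succ k =>
        rw [if_neg (Nat.succ_ne_zero k)]
        simp only [Nat.succ_sub_one]
        have hk : k ≤ ℓ := by omega
        have harith : 4 * ((k+1) * (ℓ+1-k)) < (ℓ+2)*(ℓ+1) := by
          have he : ℓ + 1 - k = ℓ + 1 - k := rfl
          zify [show k ≤ ℓ + 1 by omega]
          have hd : (r : ℤ) + 2 ≤ (ℓ : ℤ) - 2 * k := by
            have : k + 1 ≤ m := hj
            push_cast [hℓm]
            omega
          have hub' : (ℓ : ℤ) + 2 < ((r : ℤ) + 1) ^ 2 := by exact_mod_cast hub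
          nlinarith [mul_le_mul hd hd (by omega : (0:ℤ) ≤ r + 2) (by omega : (0:ℤ) ≤ (ℓ:ℤ) - 2*k)]
        have := coeff_signs_pos_aux ℓ k hk harith
        push_cast
        omega
  -- positivity for high indices
  have hpos2 : ∀ j, r + m + 2 ≤ j → j ≤ ℓ + 2 →
      0 < ((X - 1) ^ 2 * (X + 1) ^ ℓ : Polynomial ℤ).coeff j := by
    intro j hj1 hj2
    rw [coeff_signs_coeff_eq]
    rcases Nat.eq_or_lt_of_le hj2 with heq | hlt
    · subst heq
      rw [if_neg (by omega), Nat.choose_self,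
          Nat.choose_eq_zero_of_lt (by omega : ℓ < ℓ + 2 - 1)]
      norm_num
    · obtain ⟨k, rfl⟩ : ∃ k, j = k + 1 := ⟨j - 1, by omega⟩
      rw [if_neg (Nat.succ_ne_zero k)]
      simp only [Nat.succ_sub_one]
      have hk : k ≤ ℓ := by omega
      have harith : 4 * ((k+1) * (ℓ+1-k)) < (ℓ+2)*(ℓ+1) := by
        zify [show k ≤ ℓ + 1 by omega]
        have hd : (ℓ : ℤ) - 2 * k ≤ -((r : ℤ) + 2) := by
          have : r + m + 1 ≤ k := by omega
          push_cast [hℓm]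
          omega
        have hub' : (ℓ : ℤ) + 2 < ((r : ℤ) + 1) ^ 2 := by exact_mod_cast hub
        have hd' : (r : ℤ) + 2 ≤ -((ℓ : ℤ) - 2 * k) := by omega
        nlinarith [mul_le_mul hd' hd' (by omega : (0:ℤ) ≤ (r:ℤ) + 2) (by omega : (0:ℤ) ≤ -((ℓ:ℤ) - 2*k))]
      have := coeff_signs_pos_aux ℓ k hk harith
      push_cast
      omega
  -- negativity in the middle
  have hneg : ∀ j, m < j → j < r + m + 2 →
      ((X - 1) ^ 2 * (X + 1) ^ ℓ : Polynomial ℤ).coeff j < 0 := by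
    intro j hj1 hj2
    rw [coeff_signs_coeff_eq]
    obtain ⟨k, rfl⟩ : ∃ k, j = k + 1 := ⟨j - 1, by omega⟩
    rw [if_neg (Nat.succ_ne_zero k)]
    simp only [Nat.succ_sub_one]
    have hk : k ≤ ℓ := by omega
    have harith : (ℓ+2)*(ℓ+1) < 4 * ((k+1) * (ℓ+1-k)) := by
      zify [show k ≤ ℓ + 1 by omega]
      have hd1 : -(r : ℤ) ≤ (ℓ : ℤ) - 2 * k := by push_cast [hℓm]; omega
      have hd2 : (ℓ : ℤ) - 2 * k ≤ (r : ℤ) := by push_cast [hℓm]; omega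
      have hlb' : (r : ℤ) ^ 2 < (ℓ : ℤ) + 2 := by exact_mod_cast hlb
      nlinarith [mul_nonneg (by omega : (0:ℤ) ≤ (r:ℤ) - ((ℓ:ℤ) - 2*k))
        (by omega : (0:ℤ) ≤ (r:ℤ) + ((ℓ:ℤ) - 2*k))]
    have := coeff_signs_neg_aux ℓ k hk harith
    push_cast
    omega
  refine ⟨?_, ?_, ?_, ?_⟩
  · intro j hj
    rcases lt_trichotomy j (m+1) with h | h | h
    · exact ne_of_gt (hpos1 j (by omega))
    · exact ne_of_lt (hneg j (by omega) (by omega))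
    · rcases Nat.lt_or_ge j (r + m + 2) with h' | h'
      · exact ne_of_lt (hneg j (by omega) h')
      · exact ne_of_gt (hpos2 j h' hj)
  · intro j hj; exact hpos1 j (by omega)
  · intro j hj1 hj2; exact hpos2 j (by omega) hj2
  · intro j hj1 hj2; exact hneg j (by omega) (by omega)
end

section
/- Let r ≥ 2 be an integer, let ℓ = r²−2, and let c_j denote the coefficient of x^j in the polynomial (x−1)²(x+1)^ℓ (a polynomial of degree r²). Then c_j = 0 exactly for j ∈ {r(r−1)/2, r(r+1)/2}; c_j < 0 for r(r−1)/2 < j < r(r+1)/2; and c_j > 0 for j < r(r−1)/2 and for j > r(r+1)/2. In particular the sequence of coefficients, read from the leading one, consists of r(r−1)/2 positive entries, a zero, r−1 negative entries, a zero, and r(r−1)/2 positive entries. -/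
open Polynomial

private lemma coeff_formula_s12 (l j : ℕ) : ((X - 1)^2 * (X+1)^l : Polynomial ℤ).coeff j =
    (if 2 ≤ j then ((l.choose (j-2) : ℤ)) else 0)
    - 2 * (if 1 ≤ j then ((l.choose (j-1) : ℤ)) else 0) + l.choose j := by
  have h : ((X - 1)^2 * (X+1)^l : Polynomial ℤ)
      = (X+1)^l * X^2 - (X+1)^l * X^1 - (X+1)^l * X^1 + (X+1)^l := by ring
  rw [h]
  simp only [coeff_add, coeff_sub, coeff_mul_X_pow', coeff_X_add_one_pow]
  split <;> split <;> ring

private lemma choose_identity (l k : ℕ) (hk : k ≤ l) :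
    ((k:ℤ)+2)*((k:ℤ)+1) * ((l.choose k : ℤ) - 2 * l.choose (k+1) + l.choose (k+2))
    = (((l:ℤ) - 2*k - 2)^2 - ((l:ℤ)+2)) * l.choose k := by
  have hB : (l.choose (k+1) : ℤ) * ((k:ℤ)+1) = (l.choose k : ℤ) * ((l:ℤ) - k) := by
    have h := Nat.choose_succ_right_eq l k
    zify [hk] at h; linarith
  have hC : (l.choose (k+2) : ℤ) * ((k:ℤ)+2) = (l.choose (k+1) : ℤ) * ((l:ℤ) - k - 1) := by
    rcases Nat.lt_or_ge k l with h | h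
    · have h' := Nat.choose_succ_right_eq l (k+1)
      have hk1 : k + 1 ≤ l := h
      zify [hk1] at h'; linarith
    · have hkl : k = l := le_antisymm hk h
      subst hkl
      simp [Nat.choose_succ_self, Nat.choose_eq_zero_of_lt]
  linear_combination ((k:ℤ)+1)*hC + ((l:ℤ) - k - 1 - 2*((k:ℤ)+2))*hB

private lemma coeff_key (l k : ℕ) (hk : k ≤ l) :
    ((k:ℤ)+2)*((k:ℤ)+1) * ((X - 1)^2 * (X+1)^l : Polynomial ℤ).coeff (k+2)
    = (((l:ℤ) - 2*k - 2)^2 - ((l:ℤ)+2)) * l.choose k := by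
  rw [coeff_formula_s12]
  have h2 : (2:ℕ) ≤ k + 2 := by omega
  have h1 : (1:ℕ) ≤ k + 2 := by omega
  rw [if_pos h2, if_pos h1]
  have e1 : k + 2 - 2 = k := by omega
  have e2 : k + 2 - 1 = k + 1 := by omega
  rw [e1, e2]
  exact choose_identity l k hk


private lemma case2 (r a b l k : ℕ) (c A : ℤ)
    (hA : A = (l.choose k : ℤ)) (hlZ : (l:ℤ) = (r:ℤ)^2 - 2)
    (hrZ : (2:ℤ) ≤ (r:ℤ))
    (haZ : (a:ℤ) * 2 = (r:ℤ)^2 - (r:ℤ)) (hbZ : (b:ℤ) * 2 = (r:ℤ)^2 + (r:ℤ))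
    (hkl : k ≤ l)
    (hkey : ((k:ℤ)+2)*((k:ℤ)+1) * c = (((l:ℤ) - 2*(k:ℤ) - 2)^2 - ((l:ℤ)+2)) * A) :
    (c = 0 ↔ k + 2 = a ∨ k + 2 = b) ∧
    (a < k + 2 → k + 2 < b → c < 0) ∧
    (k + 2 < a → 0 < c) ∧
    (b < k + 2 → 0 < c) := by
  have hApos : (0:ℤ) < A := by rw [hA]; exact_mod_cast Nat.choose_pos hkl
  have hM : (0:ℤ) < ((k:ℤ)+2)*((k:ℤ)+1) := by positivity
  have hG : (((l:ℤ) - 2*(k:ℤ) - 2)^2 - ((l:ℤ)+2))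
      = 4 * ((a:ℤ) - ((k:ℤ)+2)) * ((b:ℤ) - ((k:ℤ)+2)) := by
    rw [hlZ]
    linear_combination (-(2*(b:ℤ) - 2*(k:ℤ) - 4))*haZ + (-((r:ℤ)^2 - (r:ℤ) - 2*(k:ℤ) - 4))*hbZ
  rw [hG] at hkey
  have habZ : (a:ℤ) < (b:ℤ) := by nlinarith
  clear hG hA hlZ haZ hbZ
  constructor
  · constructor
    · intro hc0
      rw [hc0, mul_zero] at hkey
      have h0 : ((a:ℤ) - ((k:ℤ)+2)) * ((b:ℤ) - ((k:ℤ)+2)) = 0 := by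
        by_contra h0
        rcases lt_or_gt_of_ne h0 with h | h
        · nlinarith
        · nlinarith
      rcases mul_eq_zero.mp h0 with h | h
      · left
        have : (a:ℤ) = (k:ℤ) + 2 := by linarith
        exact_mod_cast this.symm
      · right
        have : (b:ℤ) = (k:ℤ) + 2 := by linarith
        exact_mod_cast this.symm
    · rintro (h | h)
      · have haj : (a:ℤ) = (k:ℤ) + 2 := by exact_mod_cast h.symm
        rw [haj] at hkey
        simp only [sub_self, mul_zero, zero_mul] at hkey
        exact (mul_eq_zero.mp hkey).resolve_left hM.ne'
      · have hbj : (b:ℤ) = (k:ℤ) + 2 := by exact_mod_cast h.symm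
        rw [hbj] at hkey
        simp only [sub_self, mul_zero, zero_mul] at hkey
        exact (mul_eq_zero.mp hkey).resolve_left hM.ne'
  · refine ⟨?_, ?_, ?_⟩
    · intro h1 h2
      have h1Z : (a:ℤ) < (k:ℤ) + 2 := by exact_mod_cast h1
      have h2Z : (k:ℤ) + 2 < (b:ℤ) := by exact_mod_cast h2
      have hyA : (0:ℤ) < ((b:ℤ) - ((k:ℤ)+2)) * A := mul_pos (by linarith) hApos
      nlinarith
    · intro h1
      have h1Z : (k:ℤ) + 2 < (a:ℤ) := by exact_mod_cast h1
      have hyA : (0:ℤ) < ((b:ℤ) - ((k:ℤ)+2)) * A := mul_pos (by linarith) hApos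
      nlinarith
    · intro h1
      have h1Z : (b:ℤ) < (k:ℤ) + 2 := by exact_mod_cast h1
      have hxy : (0:ℤ) < ((a:ℤ) - ((k:ℤ)+2)) * ((b:ℤ) - ((k:ℤ)+2)) :=
        mul_pos_of_neg_of_neg (by linarith) (by linarith)
      nlinarith [mul_pos hxy hApos]

/-- part (3) of Lemma 1: for `r ≥ 2` and `ℓ = r² - 2`, the coefficient
of `x^j` in `(x-1)²(x+1)^ℓ` (a polynomial of degree `r²`) vanishes exactly for
`j = r(r-1)/2` and `j = r(r+1)/2`, is negative strictly between these two values of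
`j`, and is positive for `j < r(r-1)/2` and for `j > r(r+1)/2`.  In particular, read
from the leading coefficient, the signs form `r(r-1)/2` positive entries, a zero,
`r-1` negative entries, a zero, and `r(r-1)/2` positive entries. -/
theorem coeff_signs_square_case (r : ℕ) (hr : 2 ≤ r) :
    ∀ j ≤ r ^ 2,
      (((X - 1) ^ 2 * (X + 1) ^ (r ^ 2 - 2) : Polynomial ℤ).coeff j = 0 ↔
        j = r * (r - 1) / 2 ∨ j = r * (r + 1) / 2) ∧
      (r * (r - 1) / 2 < j → j < r * (r + 1) / 2 →
        ((X - 1) ^ 2 * (X + 1) ^ (r ^ 2 - 2) : Polynomial ℤ).coeff j < 0) ∧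
      (j < r * (r - 1) / 2 →
        0 < ((X - 1) ^ 2 * (X + 1) ^ (r ^ 2 - 2) : Polynomial ℤ).coeff j) ∧
      (r * (r + 1) / 2 < j →
        0 < ((X - 1) ^ 2 * (X + 1) ^ (r ^ 2 - 2) : Polynomial ℤ).coeff j) := by
  have h4 : 4 ≤ r ^ 2 := by
    have := Nat.pow_le_pow_left hr 2; norm_num at this; exact this
  set l := r ^ 2 - 2 with hl
  set a := r * (r - 1) / 2 with ha
  set b := r * (r + 1) / 2 with hb
  have hrZ : (2:ℤ) ≤ (r:ℤ) := by exact_mod_cast hr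
  have hlZ : (l:ℤ) = (r:ℤ)^2 - 2 := by
    rw [hl, Nat.cast_sub (by omega : 2 ≤ r^2)]; push_cast; ring
  have hd1 : 2 ∣ r * (r - 1) := by
    have h := (Nat.even_mul_succ_self (r-1)).two_dvd
    rw [Nat.sub_add_cancel (by omega : 1 ≤ r)] at h
    rwa [mul_comm] at h
  have hd2 : 2 ∣ r * (r + 1) := (Nat.even_mul_succ_self r).two_dvd
  have ha2 : a * 2 = r * (r - 1) := Nat.div_mul_cancel hd1
  have hb2 : b * 2 = r * (r + 1) := Nat.div_mul_cancel hd2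
  clear_value l a b
  have haZ : (a:ℤ) * 2 = (r:ℤ)^2 - r := by
    zify [show 1 ≤ r by omega] at ha2; linarith [ha2]
  have hbZ : (b:ℤ) * 2 = (r:ℤ)^2 + r := by
    zify at hb2; linarith [hb2]
  have h1aZ : 1 ≤ (a:ℤ) := by nlinarith
  have habZ : (a:ℤ) + 2 ≤ (b:ℤ) := by nlinarith
  have hbleZ : (b:ℤ) ≤ (r:ℤ)^2 := by nlinarith
  have h1a : 1 ≤ a := by exact_mod_cast h1aZ
  have hab : a + 2 ≤ b := by exact_mod_cast habZ
  intro j hj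
  match j with
  | 0 =>
    have hc0 : ((X - 1)^2 * (X+1)^l : Polynomial ℤ).coeff 0 = 1 := by
      rw [coeff_formula_s12]; norm_num
    refine ⟨?_, ?_, ?_, ?_⟩
    · rw [hc0]
      constructor
      · intro h; exact absurd h one_ne_zero
      · rintro (h | h) <;> omega
    · intro h1 _; exact absurd h1 (by omega)
    · intro _; rw [hc0]; norm_num
    · intro h1; exact absurd h1 (by omega)
  | 1 =>
    rw [coeff_formula_s12]
    have e0 : (1:ℕ) - 1 = 0 := rfl
    rw [if_neg (by omega), if_pos (le_refl 1), e0, Nat.choose_zero_right,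
      Nat.choose_one_right]
    have hc : (0:ℤ) - 2 * (1:ℕ) + (l:ℤ) = (r:ℤ)^2 - 4 := by rw [hlZ]; push_cast; ring
    rw [hc]
    rcases (by omega : r = 2 ∨ 3 ≤ r) with hr2 | hr3
    · subst hr2
      have ha1 : a = 1 := by omega
      have hb3 : b = 3 := by omega
      norm_num [ha1, hb3]
    · have hr3Z : (3:ℤ) ≤ (r:ℤ) := by exact_mod_cast hr3
      have ha3Z : 3 ≤ (a:ℤ) := by nlinarith [sq_nonneg ((r:ℤ) - 3)]
      have ha3 : 3 ≤ a := by exact_mod_cast ha3Z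
      have hcpos : (0:ℤ) < (r:ℤ)^2 - 4 := by nlinarith
      refine ⟨⟨fun h => absurd h (by omega), ?_⟩, by omega, fun _ => hcpos, by omega⟩
      rintro (h | h) <;> omega
  | (k+2) =>
    have hkl : k ≤ l := by omega
    exact case2 r a b l k _ _ rfl hlZ hrZ haZ hbZ hkl (coeff_key l k hkl)
end

section
/- Let ℓ ≥ 2 be an integer and let c_j denote the coefficient of x^j in (x−1)²(x+1)^ℓ. Then for 0 ≤ j ≤ ℓ+2, c_j = 0 if and only if 4j² − 4(ℓ+2)j + (ℓ+1)(ℓ+2) = 0, i.e. if and only if j = (ℓ+2 ± √(ℓ+2))/2. Consequently, the polynomial (x−1)²(x+1)^ℓ has a vanishing coefficient if and only if ℓ+2 is a perfect square. -/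
open Polynomial

private lemma fact1 (m n : ℕ) :
    ((m+n).choose m : ℤ) * ((m+2).factorial * n.factorial)
      = (m+n).factorial * ((m+1)*(m+2)) := by
  have h := Nat.choose_mul_factorial_mul_factorial (Nat.le_add_right m n)
  rw [Nat.add_sub_cancel_left] at h
  have hf : (m+2).factorial = (m+2) * ((m+1) * m.factorial) := by
    rw [Nat.factorial_succ, Nat.factorial_succ]
  have : (m+n).choose m * ((m+2).factorial * n.factorial)
      = (m+n).factorial * ((m+1)*(m+2)) := by
    rw [hf, ← h]; ring
  exact_mod_cast this

private lemma fact2 (m n : ℕ) :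
    ((m+n).choose (m+1) : ℤ) * ((m+2).factorial * n.factorial)
      = (m+n).factorial * ((m+2)*n) := by
  cases n with
  | zero => simp [Nat.choose_eq_zero_of_lt (by omega : m < m + 1)]
  | succ p =>
    have h := Nat.choose_mul_factorial_mul_factorial (by omega : m + 1 ≤ m + (p+1))
    have hs : m + (p+1) - (m+1) = p := by omega
    rw [hs] at h
    have hf : (m+2).factorial = (m+2) * (m+1).factorial := Nat.factorial_succ _
    have hn : (p+1).factorial = (p+1) * p.factorial := Nat.factorial_succ _
    have : (m+(p+1)).choose (m+1) * ((m+2).factorial * (p+1).factorial)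
        = (m+(p+1)).factorial * ((m+2)*(p+1)) := by
      rw [hf, hn, ← h]; ring
    exact_mod_cast this

private lemma fact3 (m n : ℕ) :
    ((m+n).choose (m+2) : ℤ) * ((m+2).factorial * n.factorial)
      = (m+n).factorial * (n*(n-1)) := by
  match n with
  | 0 => simp [Nat.choose_eq_zero_of_lt (by omega : m < m + 2)]
  | 1 => simp [Nat.choose_eq_zero_of_lt (by omega : m + 1 < m + 2)]
  | (p+2) =>
    have h := Nat.choose_mul_factorial_mul_factorial (by omega : m + 2 ≤ m + (p+2))
    have hs : m + (p+2) - (m+2) = p := by omega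
    rw [hs] at h
    have hn : (p+2).factorial = (p+2) * ((p+1) * p.factorial) := by
      rw [Nat.factorial_succ, Nat.factorial_succ]
    have : (m+(p+2)).choose (m+2) * ((m+2).factorial * (p+2).factorial)
        = (m+(p+2)).factorial * ((p+2)*(p+1)) := by
      rw [hn, ← h]; ring
    have h2 : ((m+(p+2)).choose (m+2) : ℤ) * ((m+2).factorial * (p+2).factorial)
        = (m+(p+2)).factorial * ((p+2)*(p+1)) := by exact_mod_cast this
    rw [h2]; push_cast; ring

/-- The coefficient of `x^j` in `(x-1)²(x+1)^ℓ` vanishes iff the quadratic does. -/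
private lemma coeff_iff_quad (ℓ : ℕ) (hℓ : 2 ≤ ℓ) : ∀ j ≤ ℓ + 2,
    (((X - 1) ^ 2 * (X + 1) ^ ℓ : Polynomial ℤ).coeff j = 0 ↔
      4 * (j : ℤ) ^ 2 - 4 * ((ℓ : ℤ) + 2) * (j : ℤ) + ((ℓ : ℤ) + 1) * ((ℓ : ℤ) + 2) = 0) := by
  have hexp : ((X - 1) ^ 2 * (X + 1) ^ ℓ : Polynomial ℤ)
      = X^2*(X+1)^ℓ - 2*(X*(X+1)^ℓ) + (X+1)^ℓ := by ring
  intro j hj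
  match j with
  | 0 =>
    have hc : (((X - 1) ^ 2 * (X + 1) ^ ℓ : Polynomial ℤ)).coeff 0 = 1 := by
      simp [hexp, coeff_X_pow_mul', coeff_X_mul, mul_coeff_zero, coeff_X_add_one_pow]
    rw [hc]
    constructor
    · intro h; exact absurd h one_ne_zero
    · intro h; exfalso; push_cast at h; nlinarith [h, (by exact_mod_cast hℓ : (2:ℤ) ≤ ℓ)]
  | 1 =>
    have hc : (((X - 1) ^ 2 * (X + 1) ^ ℓ : Polynomial ℤ)).coeff 1 = (ℓ : ℤ) - 2 := by
      rw [hexp]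
      have h1 : (X^2*((X+1)^ℓ) : Polynomial ℤ).coeff 1 = 0 := by
        rw [coeff_X_pow_mul']; simp
      have h2 : ((X*(X+1)^ℓ) : Polynomial ℤ).coeff 1 = ((X+1)^ℓ : Polynomial ℤ).coeff 0 := by
        simpa using coeff_X_mul ((X+1)^ℓ : Polynomial ℤ) 0
      simp [h1, h2, coeff_X_add_one_pow]; ring
    rw [hc]
    have hℓ' : (2:ℤ) ≤ (ℓ : ℤ) := by exact_mod_cast hℓ
    constructor
    · intro h; linear_combination ((ℓ:ℤ) + 1) * h
    · intro h
      have hfac : ((ℓ:ℤ) - 2) * ((ℓ:ℤ) + 1) = 0 := by linear_combination h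
      rcases mul_eq_zero.1 hfac with h' | h'
      · exact h'
      · exfalso; linarith
  | (m+2) =>
    obtain ⟨n, rfl⟩ : ∃ n, ℓ = m + n := ⟨ℓ - m, by omega⟩
    have hc : (((X - 1) ^ 2 * (X + 1) ^ (m+n) : Polynomial ℤ)).coeff (m+2)
        = ((m+n).choose m : ℤ) - 2 * (m+n).choose (m+1) + (m+n).choose (m+2) := by
      rw [hexp]
      have h1 : (X^2*((X+1)^(m+n)) : Polynomial ℤ).coeff (m+2) = ((m+n).choose m : ℤ) := by
        rw [coeff_X_pow_mul]; exact coeff_X_add_one_pow ℤ (m+n) m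
      have h2 : ((X*(X+1)^(m+n)) : Polynomial ℤ).coeff (m+2) = ((m+n).choose (m+1) : ℤ) := by
        rw [coeff_X_mul]; exact coeff_X_add_one_pow ℤ (m+n) (m+1)
      simp [h1, h2, coeff_X_add_one_pow]
    rw [hc]
    set c : ℤ := ((m+n).choose m : ℤ) - 2 * (m+n).choose (m+1) + (m+n).choose (m+2) with hcdef
    set K : ℤ := ((m+2).factorial : ℤ) * n.factorial with hKdef
    have hKpos : 0 < K := by
      have := Nat.factorial_pos (m+2); have := Nat.factorial_pos n
      positivity
    have hFpos : (0:ℤ) < ((m+n).factorial : ℤ) := by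
      have := Nat.factorial_pos (m+n); positivity
    have key : c * K = ((m+n).factorial : ℤ) *
        (4 * ((m:ℤ)+2) ^ 2 - 4 * (((m:ℤ)+(n:ℤ)) + 2) * ((m:ℤ)+2)
          + (((m:ℤ)+(n:ℤ)) + 1) * (((m:ℤ)+(n:ℤ)) + 2)) := by
      have h1 := fact1 m n
      have h2 := fact2 m n
      have h3 := fact3 m n
      rw [hcdef, hKdef]
      linear_combination h1 - 2 * h2 + h3
    have hq : (4 * ((m+2:ℕ) : ℤ) ^ 2 - 4 * (((m+n:ℕ) : ℤ) + 2) * ((m+2:ℕ) : ℤ)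
          + (((m+n:ℕ) : ℤ) + 1) * (((m+n:ℕ) : ℤ) + 2))
        = (4 * ((m:ℤ)+2) ^ 2 - 4 * (((m:ℤ)+(n:ℤ)) + 2) * ((m:ℤ)+2)
          + (((m:ℤ)+(n:ℤ)) + 1) * (((m:ℤ)+(n:ℤ)) + 2)) := by push_cast; ring
    rw [hq]
    constructor
    · intro h
      have hz : ((m+n).factorial : ℤ) *
          (4 * ((m:ℤ)+2) ^ 2 - 4 * (((m:ℤ)+(n:ℤ)) + 2) * ((m:ℤ)+2)
            + (((m:ℤ)+(n:ℤ)) + 1) * (((m:ℤ)+(n:ℤ)) + 2)) = 0 := by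
        rw [← key, h, zero_mul]
      exact (mul_eq_zero.1 hz).resolve_left (by positivity)
    · intro h
      have : c * K = 0 := by rw [key, h, mul_zero]
      exact (mul_eq_zero.1 this).resolve_right (by positivity)

private lemma quad_real_iff (L x : ℝ) (hL : 0 ≤ L + 2) :
    4 * x ^ 2 - 4 * (L + 2) * x + (L + 1) * (L + 2) = 0 ↔
      (x = ((L + 2) + Real.sqrt (L + 2)) / 2 ∨ x = ((L + 2) - Real.sqrt (L + 2)) / 2) := by
  have hs : Real.sqrt (L + 2) ^ 2 = L + 2 := Real.sq_sqrt hL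
  constructor
  · intro h
    have hz : (2*x - (L+2) - Real.sqrt (L+2)) * (2*x - (L+2) + Real.sqrt (L+2)) = 0 := by
      linear_combination h - hs
    rcases mul_eq_zero.1 hz with hz | hz
    · left; linarith
    · right; linarith
  · rintro (h | h) <;> rw [h] <;> nlinarith [hs]

/-- for `ℓ ≥ 2` and `0 ≤ j ≤ ℓ + 2`, the coefficient of `x^j` in
`(x-1)²(x+1)^ℓ` vanishes if and only if `4j² - 4(ℓ+2)j + (ℓ+1)(ℓ+2) = 0`, i.e. if and
only if `j = (ℓ + 2 ± √(ℓ+2))/2`.  Consequently `(x-1)²(x+1)^ℓ` has a vanishing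
coefficient if and only if `ℓ + 2` is a perfect square. -/
theorem coeff_vanishing_iff (ℓ : ℕ) (hℓ : 2 ≤ ℓ) :
    (∀ j ≤ ℓ + 2,
      (((X - 1) ^ 2 * (X + 1) ^ ℓ : Polynomial ℤ).coeff j = 0 ↔
        4 * (j : ℤ) ^ 2 - 4 * ((ℓ : ℤ) + 2) * (j : ℤ) + ((ℓ : ℤ) + 1) * ((ℓ : ℤ) + 2) = 0) ∧
      (((X - 1) ^ 2 * (X + 1) ^ ℓ : Polynomial ℤ).coeff j = 0 ↔
        ((j : ℝ) = (((ℓ : ℝ) + 2) + Real.sqrt ((ℓ : ℝ) + 2)) / 2 ∨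
         (j : ℝ) = (((ℓ : ℝ) + 2) - Real.sqrt ((ℓ : ℝ) + 2)) / 2))) ∧
    ((∃ j ≤ ℓ + 2, ((X - 1) ^ 2 * (X + 1) ^ ℓ : Polynomial ℤ).coeff j = 0) ↔
      ∃ k : ℕ, ℓ + 2 = k ^ 2) := by
  have hmain := coeff_iff_quad ℓ hℓ
  constructor
  · intro j hj
    refine ⟨hmain j hj, ?_⟩
    rw [hmain j hj]
    have hbridge : (4 * (j : ℤ) ^ 2 - 4 * ((ℓ : ℤ) + 2) * (j : ℤ)
          + ((ℓ : ℤ) + 1) * ((ℓ : ℤ) + 2) = 0) ↔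
        (4 * (j : ℝ) ^ 2 - 4 * ((ℓ : ℝ) + 2) * (j : ℝ)
          + ((ℓ : ℝ) + 1) * ((ℓ : ℝ) + 2) = 0) := by
      constructor
      · intro h
        have := congrArg (fun t : ℤ => (t : ℝ)) h
        push_cast at this; linarith [this]
      · intro h
        have : ((4 * (j : ℤ) ^ 2 - 4 * ((ℓ : ℤ) + 2) * (j : ℤ)
            + ((ℓ : ℤ) + 1) * ((ℓ : ℤ) + 2) : ℤ) : ℝ) = 0 := by push_cast; linarith [h]
        exact_mod_cast this
    rw [hbridge]
    exact quad_real_iff (ℓ : ℝ) (j : ℝ) (by positivity)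
  · constructor
    · rintro ⟨j, hj, hc⟩
      have hq := (hmain j hj).1 hc
      refine ⟨(2 * (j:ℤ) - ((ℓ:ℤ) + 2)).natAbs, ?_⟩
      have h2 : ((2 * (j:ℤ) - ((ℓ:ℤ) + 2)).natAbs : ℤ) ^ 2 = (2 * (j:ℤ) - ((ℓ:ℤ) + 2)) ^ 2 := by
        rw [sq, sq]; exact Int.natAbs_mul_self' _
      have h3 : ((ℓ : ℤ) + 2) = ((2 * (j:ℤ) - ((ℓ:ℤ) + 2)).natAbs : ℤ) ^ 2 := by
        rw [h2]; linarith [hq]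
      exact_mod_cast h3
    · rintro ⟨k, hk⟩
      obtain ⟨r, hr⟩ : Even (k * (k + 1)) := Nat.even_mul_succ_self k
      have hsum : r + r = ℓ + 2 + k := by
        have h1 : k * (k + 1) = k ^ 2 + k := by ring
        rw [← hr, h1, ← hk]
      have hkle : k ≤ ℓ + 2 := by
        rw [hk]; exact Nat.le_self_pow (by norm_num) k
      have hjle : r ≤ ℓ + 2 := by omega
      refine ⟨r, hjle, ?_⟩
      rw [(hmain r hjle)]
      have h2r : (2 * (r : ℤ)) = (ℓ : ℤ) + 2 + (k : ℤ) := by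
        have : 2 * r = ℓ + 2 + k := by omega
        exact_mod_cast this
      have hk' : ((k:ℤ)) ^ 2 = (ℓ : ℤ) + 2 := by exact_mod_cast hk.symm
      linear_combination (2 * (r:ℤ) - ((ℓ:ℤ) + 2) + (k:ℤ)) * h2r + hk'
end

section
/- Let P be a real polynomial of degree d ≥ 1 all of whose roots are real and simple. Then for every t ∈ [0,1], the polynomial tP + (1−t)P′ has all roots real and simple (for t ∈ (0,1] it has degree d, and for t = 0 it is P′ of degree d−1). -/
open Polynomial

open Filter Set Topology

lemma aux_tendsto_pow (l : ℝ) (hl : 0 < l) (n : ℕ) :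
    Tendsto (fun x : ℝ => Real.exp (l * x) * x ^ n) atBot (𝓝 0) := by
  have h1 : Tendsto (fun x : ℝ => -(l * x)) atBot atTop := by
    apply tendsto_neg_atBot_atTop.comp
    exact (tendsto_id (x := atBot)).const_mul_atBot hl
  have h2 := (Real.tendsto_pow_mul_exp_neg_atTop_nhds_zero n).comp h1
  have h3 := h2.const_mul (((-l)⁻¹) ^ n)
  rw [mul_zero] at h3
  refine h3.congr fun x => ?_
  have hln : (-l) ≠ 0 := by simp; linarith
  simp only [Function.comp_apply, neg_neg]
  have e : ((-l)⁻¹) ^ n * (-(l * x)) ^ n = x ^ n := by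
    rw [← mul_pow, show (-l)⁻¹ * -(l * x) = x by field_simp]
  rw [← mul_assoc, e, mul_comm]

lemma aux_tendsto_poly (l : ℝ) (hl : 0 < l) (p : ℝ[X]) :
    Tendsto (fun x : ℝ => Real.exp (l * x) * p.eval x) atBot (𝓝 0) := by
  induction p using Polynomial.induction_on' with
  | add p q hp hq => simpa [mul_add] using hp.add hq
  | monomial n a =>
      simp only [eval_monomial]
      have h := (aux_tendsto_pow l hl n).const_mul a
      rw [mul_zero] at h
      refine h.congr fun x => by ring

lemma aux_hasDerivAt (l : ℝ) (P : ℝ[X]) (x : ℝ) :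
    HasDerivAt (fun y => Real.exp (l * y) * P.eval y)
      (Real.exp (l * x) * (l * P.eval x + P.derivative.eval x)) x := by
  have h : HasDerivAt (fun y => Real.exp (l * y) * P.eval y)
      (Real.exp (l * x) * (l * 1) * P.eval x + Real.exp (l * x) * P.derivative.eval x) x :=
    (((hasDerivAt_id x).const_mul l).exp.mul (P.hasDerivAt x))
  convert h using 1
  ring

lemma rolle_gap (l : ℝ) (P : ℝ[X]) {a b : ℝ} (hab : a < b) (ha : P.eval a = 0)
    (hb : P.eval b = 0) :
    ∃ c ∈ Set.Ioo a b, l * P.eval c + P.derivative.eval c = 0 := by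
  have hc : ContinuousOn (fun y => Real.exp (l * y) * P.eval y) (Set.Icc a b) :=
    (Continuous.mul (Real.continuous_exp.comp (continuous_const.mul continuous_id))
      P.continuous).continuousOn
  obtain ⟨c, hcmem, hc0⟩ := exists_hasDerivAt_eq_zero hab hc (by rw [ha, hb, mul_zero, mul_zero])
    (fun x _ => aux_hasDerivAt l P x)
  refine ⟨c, hcmem, ?_⟩
  rcases mul_eq_zero.mp hc0 with h | h
  · exact absurd h (Real.exp_ne_zero _)
  · exact h

lemma extr_bot {f f' : ℝ → ℝ} (hd : ∀ x, HasDerivAt f (f' x) x)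
    (hlim : Tendsto f atBot (𝓝 0)) {b y : ℝ} (hyb : y < b) (hfb : f b = 0)
    (hfy : 0 < f y) : ∃ c, c < b ∧ f' c = 0 := by
  have hev : ∀ᶠ x in atBot, f x < f y := hlim.eventually_lt_const hfy
  obtain ⟨a0, ha0⟩ := eventually_atBot.mp hev
  set a := min a0 (y - 1) with ha_def
  have hay : a < y := lt_of_le_of_lt (min_le_right _ _) (by linarith)
  have hab : a < b := hay.trans hyb
  have hcont : Continuous f := by
    rw [continuous_iff_continuousAt]; exact fun x => (hd x).continuousAt
  obtain ⟨c, hcmem, hc⟩ := isCompact_Icc.exists_isMaxOn (Set.nonempty_Icc.2 hab.le)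
    hcont.continuousOn
  have hyc : f y ≤ f c := hc ⟨hay.le, hyb.le⟩
  have hca : a < c := by
    rcases lt_or_eq_of_le hcmem.1 with h | h
    · exact h
    · exact absurd (h ▸ hyc) (not_le.2 (ha0 a (min_le_left _ _)))
  have hcb : c < b := by
    rcases lt_or_eq_of_le hcmem.2 with h | h
    · exact h
    · rw [h, hfb] at hyc; linarith
  exact ⟨c, hcb, (hc.isLocalMax (Icc_mem_nhds hca hcb)).hasDerivAt_eq_zero (hd c)⟩

lemma rolle_bot {l : ℝ} (hl : 0 < l) {P : ℝ[X]} (hP : P ≠ 0) {b : ℝ}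
    (hb : P.eval b = 0) : ∃ c, c < b ∧ l * P.eval c + P.derivative.eval c = 0 := by
  obtain ⟨y, hyb, hy⟩ : ∃ y, y < b ∧ P.eval y ≠ 0 := by
    by_contra h
    push_neg at h
    exact hP (P.eq_zero_of_infinite_isRoot ((Set.Iio_infinite b).mono fun y hy => h y hy))
  set f := fun x => Real.exp (l * x) * P.eval x with hf_def
  have hfb : f b = 0 := by simp [hf_def, hb]
  have hlim := aux_tendsto_poly l hl P
  rcases lt_or_gt_of_ne hy with hneg | hpos
  · have hfy : 0 < -f y := by
      simp only [hf_def]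
      have := Real.exp_pos (l * y)
      nlinarith
    obtain ⟨c, hcb, hc⟩ := extr_bot (f := fun x => -f x)
      (f' := fun x => -(Real.exp (l * x) * (l * P.eval x + P.derivative.eval x)))
      (fun x => (aux_hasDerivAt l P x).neg) (by simpa using hlim.neg) hyb
      (by simp [hfb]) hfy
    refine ⟨c, hcb, ?_⟩
    have h0 : Real.exp (l * c) * (l * P.eval c + P.derivative.eval c) = 0 := by linarith
    rcases mul_eq_zero.mp h0 with h | h
    · exact absurd h (Real.exp_ne_zero _)
    · exact h
  · have hfy : 0 < f y := mul_pos (Real.exp_pos _) hpos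
    obtain ⟨c, hcb, hc⟩ := extr_bot (fun x => aux_hasDerivAt l P x) hlim hyb hfb hfy
    refine ⟨c, hcb, ?_⟩
    rcases mul_eq_zero.mp hc with h | h
    · exact absurd h (Real.exp_ne_zero _)
    · exact h

lemma count_aux {Q : ℝ[X]} {n : ℕ} (hQ : Q ≠ 0) (hdeg : Q.natDegree = n)
    (F : Finset ℝ) (hn : F.card = n) (g : ℝ → ℝ)
    (hg : ∀ x ∈ F, Q.eval (g x) = 0 ∧ g x < x ∧ ∀ r ∈ F, r < x → r < g x) :
    Q.roots.card = Q.natDegree ∧ Q.roots.Nodup := by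
  have hinj : Set.InjOn g F := by
    intro x hx y hy hxy
    by_contra hne
    rcases lt_or_gt_of_ne hne with h | h
    · have h1 := (hg y hy).2.2 x hx h
      have h2 := (hg x hx).2.1
      rw [hxy] at h2; linarith
    · have h1 := (hg x hx).2.2 y hy h
      have h2 := (hg y hy).2.1
      rw [hxy] at h1; linarith
  have hmap : ∀ x ∈ F, g x ∈ Q.roots.toFinset := by
    intro x hx
    rw [Multiset.mem_toFinset, mem_roots hQ]
    exact (hg x hx).1
  have h1 : n ≤ Q.roots.toFinset.card := hn ▸ Finset.card_le_card_of_injOn g hmap hinj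
  have h2 : Q.roots.toFinset.card ≤ Multiset.card Q.roots := Q.roots.toFinset_card_le
  have h3 : Multiset.card Q.roots ≤ n := hdeg ▸ Q.card_roots'
  have hcard : Multiset.card Q.roots = n := le_antisymm h3 (h1.trans h2)
  refine ⟨hcard.trans hdeg.symm, ?_⟩
  exact Multiset.toFinset_card_eq_card_iff_nodup.mp (le_antisymm h2 (by omega))


/-- if `P` is a real polynomial of degree `d ≥ 1` all of whose roots are
real and simple (it has `d` pairwise distinct real roots counted with multiplicity),
then for every `t ∈ [0,1]` the polynomial `tP + (1-t)P'` has all roots real and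
simple; for `t ∈ (0,1]` it has degree `d` and for `t = 0` it is `P'`, of degree
`d - 1`. -/
theorem segment_to_derivative_hyperbolic (d : ℕ) (hd : 1 ≤ d) (P : Polynomial ℝ)
    (hdeg : P.natDegree = d) (hcard : P.roots.card = d) (hnodup : P.roots.Nodup) :
    ∀ t : ℝ, 0 ≤ t → t ≤ 1 →
      (C t * P + C (1 - t) * P.derivative).roots.card =
        (C t * P + C (1 - t) * P.derivative).natDegree ∧
      (C t * P + C (1 - t) * P.derivative).roots.Nodup ∧
      (0 < t → (C t * P + C (1 - t) * P.derivative).natDegree = d) ∧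
      (t = 0 → (C t * P + C (1 - t) * P.derivative).natDegree = d - 1) := by
  intro t ht0 ht1
  have hP0 : P ≠ 0 := by intro h; rw [h, natDegree_zero] at hdeg; omega
  set F := P.roots.toFinset with hF
  have hFcard : F.card = d := by
    rw [hF, Multiset.toFinset_card_eq_card_iff_nodup.mpr hnodup, hcard]
  have hFroot : ∀ x ∈ F, P.eval x = 0 := fun x hx =>
    (mem_roots hP0).mp (Multiset.mem_toFinset.mp hx)
  have hcoeff : P.derivative.coeff (d - 1) ≠ 0 := by
    rw [coeff_derivative, show d - 1 + 1 = d from by omega]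
    have hlc : P.coeff d ≠ 0 := by
      rw [← hdeg]; exact mt leadingCoeff_eq_zero.mp hP0
    exact mul_ne_zero hlc (by positivity)
  have hd' : P.derivative.natDegree = d - 1 :=
    le_antisymm (by simpa [hdeg] using P.natDegree_derivative_le)
      (le_natDegree_of_ne_zero hcoeff)
  have hD0 : P.derivative ≠ 0 := fun h => hcoeff (by simp [h])
  by_cases ht1' : t = 1
  · subst ht1'
    have hsimp : C (1:ℝ) * P + C (1 - 1) * P.derivative = P := by simp
    rw [hsimp]
    exact ⟨hcard.trans hdeg.symm, hnodup, fun _ => hdeg, fun h => by norm_num at h⟩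
  by_cases ht0' : t = 0
  · subst ht0'
    have hsimp : C (0:ℝ) * P + C (1 - 0) * P.derivative = P.derivative := by simp
    rw [hsimp]
    have hne : F.Nonempty := by rw [← Finset.card_pos, hFcard]; omega
    set m := F.min' hne with hm
    have key : ∀ x ∈ F.erase m, ∃ c, P.derivative.eval c = 0 ∧ c < x ∧
        ∀ r ∈ F.erase m, r < x → r < c := by
      intro x hx
      have hxF : x ∈ F := Finset.mem_of_mem_erase hx
      have hmx : m < x := lt_of_le_of_ne (F.min'_le x hxF) (Ne.symm (Finset.ne_of_mem_erase hx))
      have hSne : (F.filter (fun r => r < x)).Nonempty :=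
        ⟨m, Finset.mem_filter.2 ⟨F.min'_mem hne, hmx⟩⟩
      set p := (F.filter (fun r => r < x)).max' hSne with hp
      have hpS := (F.filter (fun r => r < x)).max'_mem hSne
      have hpF : p ∈ F := (Finset.mem_filter.mp hpS).1
      have hpx : p < x := (Finset.mem_filter.mp hpS).2
      obtain ⟨c, hcmem, hc⟩ := rolle_gap 0 P hpx (hFroot p hpF) (hFroot x hxF)
      refine ⟨c, by simpa using hc, hcmem.2, fun r hr hrx => ?_⟩
      exact lt_of_le_of_lt
        ((F.filter (fun r => r < x)).le_max' r
          (Finset.mem_filter.2 ⟨Finset.mem_of_mem_erase hr, hrx⟩)) hcmem.1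
    choose! g hg using key
    obtain ⟨h1, h2⟩ := count_aux hD0 hd' (F.erase m)
      (by rw [Finset.card_erase_of_mem (F.min'_mem hne), hFcard]) g hg
    exact ⟨h1, h2, fun h => absurd h (lt_irrefl _), fun _ => hd'⟩
  · have htpos : 0 < t := lt_of_le_of_ne ht0 (Ne.symm ht0')
    have ht1lt : t < 1 := lt_of_le_of_ne ht1 ht1'
    have h1t : (0:ℝ) < 1 - t := by linarith
    set l := t / (1 - t) with hl_def
    have hl : 0 < l := div_pos htpos h1t
    set Q := C t * P + C (1 - t) * P.derivative with hQ_def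
    have hlt : (C (1 - t) * P.derivative).degree < (C t * P).degree := by
      rw [degree_C_mul (ne_of_gt h1t), degree_C_mul (ne_of_gt htpos)]
      exact degree_derivative_lt hP0
    have hQdeg : Q.degree = P.degree := by
      rw [hQ_def, degree_add_eq_left_of_degree_lt hlt, degree_C_mul (ne_of_gt htpos)]
    have hQnat : Q.natDegree = d := (natDegree_eq_of_degree_eq hQdeg).trans hdeg
    have hQ0 : Q ≠ 0 := by intro h; rw [h, natDegree_zero] at hQnat; omega
    have heval : ∀ c, l * P.eval c + P.derivative.eval c = 0 → Q.eval c = 0 := by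
      intro c hc
      rw [hQ_def]
      simp only [eval_add, eval_mul, eval_C]
      have hne : (1:ℝ) - t ≠ 0 := ne_of_gt h1t
      have heq : t * P.eval c + (1 - t) * P.derivative.eval c
          = (1 - t) * (l * P.eval c + P.derivative.eval c) := by
        rw [hl_def]; field_simp
      rw [heq, hc, mul_zero]
    have key : ∀ x ∈ F, ∃ c, Q.eval c = 0 ∧ c < x ∧ ∀ r ∈ F, r < x → r < c := by
      intro x hx
      by_cases hSne : (F.filter (fun r => r < x)).Nonempty
      · set p := (F.filter (fun r => r < x)).max' hSne with hp
        have hpS := (F.filter (fun r => r < x)).max'_mem hSne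
        have hpF : p ∈ F := (Finset.mem_filter.mp hpS).1
        have hpx : p < x := (Finset.mem_filter.mp hpS).2
        obtain ⟨c, hcmem, hc⟩ := rolle_gap l P hpx (hFroot p hpF) (hFroot x hx)
        refine ⟨c, heval c hc, hcmem.2, fun r hr hrx => ?_⟩
        exact lt_of_le_of_lt
          ((F.filter (fun r => r < x)).le_max' r (Finset.mem_filter.2 ⟨hr, hrx⟩)) hcmem.1
      · obtain ⟨c, hcx, hc⟩ := rolle_bot hl hP0 (hFroot x hx)
        exact ⟨c, heval c hc, hcx, fun r hr hrx =>
          absurd ⟨r, Finset.mem_filter.2 ⟨hr, hrx⟩⟩ hSne⟩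
    choose! g hg using key
    obtain ⟨h1, h2⟩ := count_aux hQ0 hQnat F hFcard g hg
    exact ⟨h1, h2, fun _ => hQnat, fun h => absurd h ht0'⟩
end
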